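/- arXiv:1302.2421 — 4 statements merged into one kernel-verified Lean document; each statement's English description precedes it below -/
import Mathlib

section
/- Let Ω ⊂ ℝ^d be a nonempty open set and let μ be a probability measure supported on the closure of Ω. If the mapping x ↦ h_μ(x) is continuous on the closure of Ω, then it is constant, equal to d. -/
open MeasureTheory Metric Filter Set
open scoped ENNReal Topology
open Classical

/-- The lower local dimension (local Hölder exponent) of a measure `μ` on `ℝ^d` at `x`:
`liminf_{r → 0⁺} log μ(B(x,r)) / log r`, with the convention that it is `+∞`
when `x` does not belong to the support of `μ`. -/
noncomputable def locDimE {d : ℕ} (μ : Measure (EuclideanSpace ℝ (Fin d)))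
    (x : EuclideanSpace ℝ (Fin d)) : EReal :=
  if ∀ r : ℝ, 0 < r → 0 < μ (ball x r) then
    Filter.liminf
      (fun r : ℝ => ((Real.log ((μ (ball x r)).toReal) / Real.log r : ℝ) : EReal))
      (nhdsWithin 0 (Set.Ioi 0))
  else ⊤

/-- `log C / log r + d → d` as `r → 0⁺`. -/
lemma aux_tendsto (C : ℝ) (d : ℕ) :
    Tendsto (fun r : ℝ => Real.log C / Real.log r + (d : ℝ)) (𝓝[>] (0:ℝ)) (𝓝 (d : ℝ)) := by
  have h1 : Tendsto (fun r : ℝ => Real.log C / Real.log r) (𝓝[>] (0:ℝ)) (𝓝 0) := by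
    simp only [div_eq_mul_inv]
    have hneg : Tendsto (fun r : ℝ => -Real.log r) (𝓝[>] (0:ℝ)) atTop :=
      tendsto_neg_atBot_atTop.comp Real.tendsto_log_nhdsGT_zero
    have h2 := hneg.inv_tendsto_atTop
    have : Tendsto (fun r : ℝ => (Real.log r)⁻¹) (𝓝[>] (0:ℝ)) (𝓝 0) := by
      have h3 := h2.neg
      rw [show -(0:ℝ) = 0 by ring] at h3
      exact h3.congr fun x => by simp [inv_neg]
    simpa using (this.const_mul (Real.log C))
  simpa using h1.add_const (d : ℝ)

/-- If eventually `f r ≤ C * r^d` with `f r > 0`, then the liminf of `log f r / log r` is ≥ d. -/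
lemma liminf_ge_of_upper_bound {d : ℕ} {f : ℝ → ℝ} {C : ℝ} (hC : 0 < C)
    (hf : ∀ᶠ r in 𝓝[>] (0:ℝ), 0 < f r)
    (hev : ∀ᶠ r in 𝓝[>] (0:ℝ), f r ≤ C * r ^ d) :
    (d : EReal) ≤ Filter.liminf
      (fun r : ℝ => ((Real.log (f r) / Real.log r : ℝ) : EReal)) (𝓝[>] (0:ℝ)) := by
  have hr1 : ∀ᶠ r in 𝓝[>] (0:ℝ), r ∈ Ioo (0:ℝ) 1 :=
    Ioo_mem_nhdsGT_of_mem ⟨le_rfl, one_pos⟩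
  have key : ∀ᶠ r in 𝓝[>] (0:ℝ),
      ((Real.log C / Real.log r + (d:ℝ) : ℝ) : EReal)
        ≤ ((Real.log (f r) / Real.log r : ℝ) : EReal) := by
    filter_upwards [hf, hev, hr1] with r hfr hle hr
    have hlogr : Real.log r < 0 := Real.log_neg hr.1 hr.2
    have hrd : (0:ℝ) < r ^ d := pow_pos hr.1 d
    have h1 : Real.log (f r) ≤ Real.log C + (d:ℝ) * Real.log r := by
      have := Real.log_le_log hfr hle
      rwa [Real.log_mul hC.ne' hrd.ne', Real.log_pow] at this
    have h2 : (Real.log C + (d:ℝ) * Real.log r) / Real.log r ≤ Real.log (f r) / Real.log r :=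
      div_le_div_of_nonpos_of_le hlogr.le h1
    rw [add_div, mul_div_assoc, div_self hlogr.ne] at h2
    have : Real.log C / Real.log r + (d:ℝ) ≤ Real.log (f r) / Real.log r := by
      linarith
    exact EReal.coe_le_coe_iff.2 this
  calc (d : EReal)
      = Filter.liminf (fun r : ℝ =>
          ((Real.log C / Real.log r + (d:ℝ) : ℝ) : EReal)) (𝓝[>] (0:ℝ)) := by
        refine (Filter.Tendsto.liminf_eq ?_).symm
        exact EReal.tendsto_coe.2 (aux_tendsto C d)
    _ ≤ _ := Filter.liminf_le_liminf key

/-- If eventually `c * r^d ≤ f r` with `c > 0`, then the liminf of `log f r / log r` is ≤ d. -/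
lemma liminf_le_of_lower_bound {d : ℕ} {f : ℝ → ℝ} {c : ℝ} (hc : 0 < c)
    (hev : ∀ᶠ r in 𝓝[>] (0:ℝ), c * r ^ d ≤ f r) :
    Filter.liminf
      (fun r : ℝ => ((Real.log (f r) / Real.log r : ℝ) : EReal)) (𝓝[>] (0:ℝ))
      ≤ (d : EReal) := by
  have hr1 : ∀ᶠ r in 𝓝[>] (0:ℝ), r ∈ Ioo (0:ℝ) 1 :=
    Ioo_mem_nhdsGT_of_mem ⟨le_rfl, one_pos⟩
  have key : ∀ᶠ r in 𝓝[>] (0:ℝ),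
      ((Real.log (f r) / Real.log r : ℝ) : EReal)
        ≤ ((Real.log c / Real.log r + (d:ℝ) : ℝ) : EReal) := by
    filter_upwards [hev, hr1] with r hle hr
    have hlogr : Real.log r < 0 := Real.log_neg hr.1 hr.2
    have hrd : (0:ℝ) < r ^ d := pow_pos hr.1 d
    have h1 : Real.log c + (d:ℝ) * Real.log r ≤ Real.log (f r) := by
      have := Real.log_le_log (by positivity) hle
      rwa [Real.log_mul hc.ne' hrd.ne', Real.log_pow] at this
    have h2 : Real.log (f r) / Real.log r ≤ (Real.log c + (d:ℝ) * Real.log r) / Real.log r :=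
      div_le_div_of_nonpos_of_le hlogr.le h1
    rw [add_div, mul_div_assoc, div_self hlogr.ne] at h2
    exact EReal.coe_le_coe_iff.2 (by linarith)
  calc Filter.liminf (fun r : ℝ => ((Real.log (f r) / Real.log r : ℝ) : EReal)) (𝓝[>] (0:ℝ))
      ≤ Filter.liminf (fun r : ℝ =>
          ((Real.log c / Real.log r + (d:ℝ) : ℝ) : EReal)) (𝓝[>] (0:ℝ)) :=
        Filter.liminf_le_liminf key
    _ = (d : EReal) := Filter.Tendsto.liminf_eq (EReal.tendsto_coe.2 (aux_tendsto c d))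

lemma ae_liminf_ge {d : ℕ} (μ : Measure (EuclideanSpace ℝ (Fin d))) [IsProbabilityMeasure μ] :
    ∀ᵐ x ∂(volume : Measure (EuclideanSpace ℝ (Fin d))),
      (∀ r : ℝ, 0 < r → 0 < μ (ball x r)) →
      (d : EReal) ≤ Filter.liminf
        (fun r : ℝ => ((Real.log ((μ (ball x r)).toReal) / Real.log r : ℝ) : EReal))
        (𝓝[>] (0:ℝ)) := by
  filter_upwards [Besicovitch.ae_tendsto_rnDeriv μ volume, Measure.rnDeriv_lt_top μ volume]
    with x hx hL hpos
  set L := μ.rnDeriv volume x with hLdef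
  set κ := volume (ball (0 : EuclideanSpace ℝ (Fin d)) 1) with hκdef
  have hκ0 : κ ≠ 0 := (measure_ball_pos volume _ one_pos).ne'
  have hκt : κ ≠ ∞ := measure_ball_lt_top.ne
  have hL1t : L + 1 ≠ ∞ := by
    simp [ENNReal.add_eq_top, hL.ne]
  have hL10 : L + 1 ≠ 0 := by simp [add_eq_zero]
  have hevlt : ∀ᶠ r in 𝓝[>] (0:ℝ), μ (closedBall x r) / volume (closedBall x r) < L + 1 :=
    hx.eventually_lt_const (ENNReal.lt_add_right hL.ne one_ne_zero)
  have hevr : ∀ᶠ r in 𝓝[>] (0:ℝ), (0:ℝ) < r := eventually_mem_nhdsWithin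
  set C : ℝ := (L + 1).toReal * κ.toReal with hCdef
  have hC : 0 < C := by
    apply mul_pos <;> exact ENNReal.toReal_pos (by assumption) (by assumption)
  refine liminf_ge_of_upper_bound hC ?_ ?_
  · filter_upwards [hevr] with r hr
    exact ENNReal.toReal_pos (hpos r hr).ne' (measure_ne_top μ _)
  · filter_upwards [hevlt, hevr] with r hlt hr
    have hvol : volume (closedBall x r) = ENNReal.ofReal (r ^ d) * κ := by
      rw [hκdef, Measure.addHaar_closedBall _ _ hr.le, finrank_euclideanSpace_fin]
    have hvol0 : volume (closedBall x r) ≠ 0 := (measure_closedBall_pos volume _ hr).ne'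
    have hvolt : volume (closedBall x r) ≠ ∞ := measure_closedBall_lt_top.ne
    have h1 : μ (closedBall x r) < (L + 1) * volume (closedBall x r) :=
      (ENNReal.div_lt_iff (Or.inl hvol0) (Or.inl hvolt)).1 hlt
    have h2 : μ (ball x r) ≤ (L + 1) * (ENNReal.ofReal (r ^ d) * κ) := by
      rw [← hvol]
      exact (measure_mono ball_subset_closedBall).trans h1.le
    have h3 := ENNReal.toReal_mono (by
      refine ENNReal.mul_ne_top hL1t (ENNReal.mul_ne_top ?_ hκt)
      exact ENNReal.ofReal_ne_top) h2
    rw [ENNReal.toReal_mul, ENNReal.toReal_mul, ENNReal.toReal_ofReal (by positivity)] at h3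
    calc (μ (ball x r)).toReal ≤ (L+1).toReal * (r ^ d * κ.toReal) := h3
      _ = C * r ^ d := by rw [hCdef]; ring

lemma ae_liminf_le {d : ℕ} (μ : Measure (EuclideanSpace ℝ (Fin d))) [IsProbabilityMeasure μ] :
    ∀ᵐ x ∂μ, Filter.liminf
        (fun r : ℝ => ((Real.log ((μ (ball x r)).toReal) / Real.log r : ℝ) : EReal))
        (𝓝[>] (0:ℝ)) ≤ (d : EReal) := by
  filter_upwards [Besicovitch.ae_tendsto_rnDeriv volume μ, Measure.rnDeriv_lt_top volume μ]
    with x hx hL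
  set L := (volume : Measure (EuclideanSpace ℝ (Fin d))).rnDeriv μ x with hLdef
  set κ := volume (ball (0 : EuclideanSpace ℝ (Fin d)) 1) with hκdef
  have hκ0 : κ ≠ 0 := (measure_ball_pos volume _ one_pos).ne'
  have hκt : κ ≠ ∞ := measure_ball_lt_top.ne
  have hL1t : L + 1 ≠ ∞ := by simp [ENNReal.add_eq_top, hL.ne]
  have hL10 : L + 1 ≠ 0 := by simp [add_eq_zero]
  have hevlt : ∀ᶠ r in 𝓝[>] (0:ℝ), volume (closedBall x r) / μ (closedBall x r) < L + 1 :=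
    hx.eventually_lt_const (ENNReal.lt_add_right hL.ne one_ne_zero)
  have hevr : ∀ᶠ r in 𝓝[>] (0:ℝ), (0:ℝ) < r := eventually_mem_nhdsWithin
  set c : ℝ := κ.toReal / ((L + 1).toReal * 2 ^ d) with hcdef
  have hκR : 0 < κ.toReal := ENNReal.toReal_pos hκ0 hκt
  have hLR : 0 < (L+1).toReal := ENNReal.toReal_pos hL10 hL1t
  have hc : 0 < c := by
    apply div_pos hκR (by positivity)
  refine liminf_le_of_lower_bound hc ?_
  have hev2 : ∀ᶠ r in 𝓝[>] (0:ℝ),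
      volume (closedBall x (r/2)) / μ (closedBall x (r/2)) < L + 1 := by
    have h2 : Tendsto (fun r : ℝ => r / 2) (𝓝[>] (0:ℝ)) (𝓝[>] (0:ℝ)) := by
      apply tendsto_nhdsWithin_of_tendsto_nhds_of_eventually_within
      · have h0 : Tendsto (fun r : ℝ => r / 2) (𝓝 (0:ℝ)) (𝓝 (0:ℝ)) := by
          have h1 : Tendsto (fun r : ℝ => r) (𝓝 (0:ℝ)) (𝓝 (0:ℝ)) := tendsto_id
          simpa using h1.div_const (2:ℝ)
        exact h0.mono_left nhdsWithin_le_nhds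
      · filter_upwards [hevr] with r hr; exact div_pos hr two_pos
    exact h2.eventually hevlt
  filter_upwards [hev2, hevr] with r hlt hr
  have hr2 : (0:ℝ) < r / 2 := by linarith
  have hvol : volume (closedBall x (r/2)) = ENNReal.ofReal ((r/2) ^ d) * κ := by
    rw [hκdef, Measure.addHaar_closedBall _ _ hr2.le, finrank_euclideanSpace_fin]
  have hvol0 : volume (closedBall x (r/2)) ≠ 0 := (measure_closedBall_pos volume _ hr2).ne'
  have hμ0 : μ (closedBall x (r/2)) ≠ 0 := by
    intro h0
    rw [h0, ENNReal.div_zero hvol0] at hlt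
    exact (hlt.trans_le le_top).false
  have hvolt : volume (closedBall x (r/2)) ≠ ∞ := measure_closedBall_lt_top.ne
  have h1 : volume (closedBall x (r/2)) ≤ (L + 1) * μ (closedBall x (r/2)) :=
    le_of_lt ((ENNReal.div_lt_iff (Or.inl hμ0) (Or.inr hvolt)).1 hlt)
  have h2 : volume (closedBall x (r/2)) / (L + 1) ≤ μ (closedBall x (r/2)) :=
    (ENNReal.div_le_iff_le_mul (Or.inl hL10) (Or.inl hL1t)).2 (h1.trans_eq (mul_comm _ _))
  have h3 : ENNReal.ofReal ((r/2) ^ d) * κ / (L + 1) ≤ μ (ball x r) := by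
    rw [← hvol]
    refine h2.trans (measure_mono (closedBall_subset_ball ?_))
    linarith
  have h4 := ENNReal.toReal_mono (measure_ne_top μ _) h3
  rw [ENNReal.toReal_div, ENNReal.toReal_mul, ENNReal.toReal_ofReal (by positivity)] at h4
  have heq : (r/2) ^ d * κ.toReal / (L+1).toReal = c * r ^ d := by
    rw [hcdef, div_pow]
    field_simp
  linarith [h4, heq ▸ h4]

/-- If `μ` is a probability measure supported on the closure of a nonempty open set
`Ω ⊆ ℝ^d` (i.e. the closure of `Ω` is the smallest closed set of full `μ`-measure),
and the local dimension map `x ↦ h_μ(x)` is continuous on the closure of `Ω`,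
then it is constant there, equal to `d`. -/
theorem locDim_continuous_implies_constant
    {d : ℕ} (Ω : Set (EuclideanSpace ℝ (Fin d))) (hΩopen : IsOpen Ω) (hΩne : Ω.Nonempty)
    (μ : Measure (EuclideanSpace ℝ (Fin d))) [IsProbabilityMeasure μ]
    (hfull : μ (closure Ω)ᶜ = 0)
    (hmin : ∀ F : Set (EuclideanSpace ℝ (Fin d)), IsClosed F → μ Fᶜ = 0 → closure Ω ⊆ F)
    (hcont : ContinuousOn (locDimE μ) (closure Ω)) :
    ∀ x ∈ closure Ω, locDimE μ x = (d : EReal) := by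
  have hsupp : ∀ x ∈ closure Ω, ∀ r : ℝ, 0 < r → 0 < μ (ball x r) := by
    intro x hx r hr
    by_contra h
    push_neg at h
    have h0 : μ (ball x r) = 0 := le_antisymm h zero_le
    have hF := hmin (ball x r)ᶜ (isClosed_compl_iff.2 isOpen_ball) (by rwa [compl_compl])
    exact (hF hx) (mem_ball_self hr)
  have hloc : ∀ x ∈ closure Ω, locDimE μ x =
      Filter.liminf
        (fun r : ℝ => ((Real.log ((μ (ball x r)).toReal) / Real.log r : ℝ) : EReal))
        (𝓝[>] (0:ℝ)) := by
    intro x hx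
    rw [locDimE, if_pos (hsupp x hx)]
  -- Upper bound
  set A := {x | x ∈ closure Ω ∧ locDimE μ x ≤ (d:EReal)} with hAdef
  have hA : ∀ᵐ x ∂μ, x ∈ A := by
    have h1 : ∀ᵐ x ∂μ, x ∈ closure Ω := by
      rw [ae_iff]
      exact hfull
    filter_upwards [h1, ae_liminf_le μ] with x hx hle
    exact ⟨hx, by rw [hloc x hx]; exact hle⟩
  have hAfull : μ Aᶜ = 0 := ae_iff.1 hA
  have hsubA : closure Ω ⊆ closure A :=
    hmin (closure A) isClosed_closure
      (measure_mono_null (compl_subset_compl.2 subset_closure) hAfull)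
  have hub : ∀ x ∈ closure Ω, locDimE μ x ≤ (d:EReal) := by
    intro x hx
    have hne : (𝓝[A] x).NeBot := mem_closure_iff_nhdsWithin_neBot.1 (hsubA hx)
    have ht : Tendsto (locDimE μ) (𝓝[A] x) (𝓝 (locDimE μ x)) :=
      (hcont x hx).mono (fun y hy => hy.1)
    exact le_of_tendsto ht (eventually_mem_nhdsWithin.mono fun y hy => hy.2)
  -- Lower bound
  set B := {x | x ∈ closure Ω ∧ (d:EReal) ≤ locDimE μ x} with hBdef
  have hBae : ∀ᵐ x ∂(volume : Measure (EuclideanSpace ℝ (Fin d))), x ∈ Ω → x ∈ B := by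
    filter_upwards [ae_liminf_ge μ] with x hx hxΩ
    have hxc := subset_closure hxΩ
    exact ⟨hxc, by rw [hloc x hxc]; exact hx (hsupp x hxc)⟩
  have hN : volume {x : EuclideanSpace ℝ (Fin d) | ¬ (x ∈ Ω → x ∈ B)} = 0 := ae_iff.1 hBae
  have hΩsubB : Ω ⊆ closure B := by
    intro u hu
    rw [_root_.mem_closure_iff]
    intro O hO huO
    by_contra hempty
    push_neg at hempty
    have hsub2 : O ∩ Ω ⊆ {x : EuclideanSpace ℝ (Fin d) | ¬ (x ∈ Ω → x ∈ B)} := by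
      intro y hy
      intro himp
      have : y ∈ O ∩ B := ⟨hy.1, himp hy.2⟩
      rw [hempty] at this
      exact this
    have hpos : 0 < volume (O ∩ Ω) :=
      (hO.inter hΩopen).measure_pos volume ⟨u, huO, hu⟩
    exact hpos.ne' (measure_mono_null hsub2 hN)
  have hsubB : closure Ω ⊆ closure B := closure_minimal hΩsubB isClosed_closure
  have hlb : ∀ x ∈ closure Ω, (d:EReal) ≤ locDimE μ x := by
    intro x hx
    have hne : (𝓝[B] x).NeBot := mem_closure_iff_nhdsWithin_neBot.1 (hsubB hx)
    have ht : Tendsto (locDimE μ) (𝓝[B] x) (𝓝 (locDimE μ x)) :=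
      (hcont x hx).mono (fun y hy => hy.1)
    exact ge_of_tendsto ht (eventually_mem_nhdsWithin.mono fun y hy => hy.2)
  intro x hx
  exact le_antisymm (hub x hx) (hlb x hx)
end

section
/- Let μ be a non-atomic positive Borel measure supported on [0,1] and let 0 ≤ α < 1. Assume that for every ε > 0 the set {x ∈ [0,1] : h_μ(x) ≤ α + ε} is dense in [0,1], and that h_μ(x) ≥ α for all x ∈ [0,1]. Then the set E_μ(α) = {x ∈ [0,1] : h_μ(x) = α} is dense in [0,1]. -/
open MeasureTheory Metric Filter Set
open scoped ENNReal Topology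
open Classical

/-- The lower local dimension (local Hölder exponent) of a measure `μ` on `ℝ` at `x`:
`liminf_{r → 0⁺} log μ(B(x,r)) / log r`, with the convention that it is `+∞`
when `x` does not belong to the support of `μ`. -/
noncomputable def locDim (μ : Measure ℝ) (x : ℝ) : EReal :=
  if ∀ r : ℝ, 0 < r → 0 < μ (ball x r) then
    Filter.liminf
      (fun r : ℝ => ((Real.log ((μ (ball x r)).toReal) / Real.log r : ℝ) : EReal))
      (nhdsWithin 0 (Set.Ioi 0))
  else ⊤

/-- Hausdorff dimension of a set, with the convention `dim ∅ = -∞`. -/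
noncomputable def dimHE (s : Set ℝ) : EReal :=
  if s.Nonempty then ((dimH s : ℝ≥0∞) : EReal) else ⊥

/-- The multifractal spectrum of a measure supported in `[0,1]`:
`d_μ(h) = dim_H {x ∈ [0,1] : h_μ(x) = h}`, with `dim ∅ = -∞`. -/
noncomputable def spec (μ : Measure ℝ) (h : EReal) : EReal :=
  dimHE {x ∈ Set.Icc (0:ℝ) 1 | locDim μ x = h}

/-- A measure supported in `[0,1]` is homogeneously multifractal (HM) if its restriction to any
non-degenerate subinterval of `[0,1]` has the same multifractal spectrum as the whole measure. -/
def IsHM (μ : Measure ℝ) : Prop :=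
  ∀ a b : ℝ, 0 ≤ a → a < b → b ≤ 1 →
    ∀ h : EReal, 0 ≤ h →
      dimHE {x ∈ Set.Ioo a b | locDim μ x = h} = spec μ h

/-- The (open) set of points `x` such that `μ(B(x,r)) > r ^ β` for some radius `r < δ`. -/
def Uset (μ : Measure ℝ) (β δ : ℝ) : Set ℝ :=
  {x | ∃ r : ℝ, 0 < r ∧ r < δ ∧ ENNReal.ofReal (r ^ β) < μ (ball x r)}

lemma isOpen_Uset (μ : Measure ℝ) (β δ : ℝ) : IsOpen (Uset μ β δ) := by
  rw [isOpen_iff_mem_nhds]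
  rintro x ⟨r, hr0, hrδ, hrμ⟩
  have h1 : ∃ r' : ℝ, r < r' ∧ r' < δ ∧ ENNReal.ofReal (r' ^ β) < μ (ball x r) := by
    rcases eq_or_ne (μ (ball x r)) ⊤ with htop | htop
    · obtain ⟨r', hr'⟩ := exists_between hrδ
      exact ⟨r', hr'.1, hr'.2, htop ▸ ENNReal.ofReal_lt_top⟩
    · have hlt : r ^ β < (μ (ball x r)).toReal :=
        (ENNReal.ofReal_lt_iff_lt_toReal (Real.rpow_nonneg hr0.le β) htop).1 hrμ
      have hc : ContinuousAt (fun s : ℝ => s ^ β) r :=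
        Real.continuousAt_rpow_const r β (Or.inl hr0.ne')
      have h2 : ∀ᶠ s in 𝓝[>] r, s ^ β < (μ (ball x r)).toReal :=
        eventually_nhdsWithin_of_eventually_nhds (hc.eventually_lt continuousAt_const hlt)
      have h3 : ∀ᶠ s in 𝓝[>] r, s < δ :=
        eventually_nhdsWithin_of_eventually_nhds (Filter.Tendsto.eventually_lt_const hrδ tendsto_id)
      have h4 : ∀ᶠ s in 𝓝[>] r, r < s := self_mem_nhdsWithin
      obtain ⟨r', ⟨h2', h3'⟩, h4'⟩ := ((h2.and h3).and h4).exists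
      refine ⟨r', h4', h3', ?_⟩
      exact (ENNReal.ofReal_lt_iff_lt_toReal (Real.rpow_nonneg (hr0.trans h4').le β) htop).2 h2'
  obtain ⟨r', hrr', hr'δ, hr'μ⟩ := h1
  refine Filter.mem_of_superset (ball_mem_nhds x (sub_pos.2 hrr')) ?_
  intro y hy
  refine ⟨r', hr0.trans hrr', hr'δ, lt_of_lt_of_le hr'μ (measure_mono ?_)⟩
  intro z hz
  have h1 : dist z x < r := hz
  have h2 : dist y x < r' - r := hy
  have : dist z y ≤ dist z x + dist x y := dist_triangle z x y
  rw [dist_comm x y] at this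
  exact lt_of_le_of_lt this (by linarith)

lemma mem_Uset_of_locDim_lt (μ : Measure ℝ) {y β δ : ℝ} (hδ : 0 < δ)
    (hy : locDim μ y < (β : EReal)) : y ∈ Uset μ β δ := by
  rw [locDim] at hy
  split_ifs at hy with hpos
  · have hfreq := Filter.frequently_lt_of_liminf_lt (u := fun r : ℝ =>
      ((Real.log ((μ (ball y r)).toReal) / Real.log r : ℝ) : EReal)) (by isBoundedDefault) hy
    have hmem : Set.Ioo (0:ℝ) (min δ 1) ∈ 𝓝[>] (0:ℝ) :=
      Ioo_mem_nhdsGT_of_mem ⟨le_refl 0, lt_min hδ one_pos⟩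
    obtain ⟨r, hrf, hr⟩ := (hfreq.and_eventually (eventually_of_mem hmem fun _ h => h)).exists
    refine ⟨r, hr.1, lt_of_lt_of_le hr.2 (min_le_left _ _), ?_⟩
    have hr1 : r < 1 := lt_of_lt_of_le hr.2 (min_le_right _ _)
    rcases eq_or_ne (μ (ball y r)) ⊤ with htop | htop
    · rw [htop]; exact ENNReal.ofReal_lt_top
    · have ht : 0 < (μ (ball y r)).toReal := ENNReal.toReal_pos (hpos r hr.1).ne' htop
      have hlogr : Real.log r < 0 := Real.log_neg hr.1 hr1
      have hlt : Real.log ((μ (ball y r)).toReal) / Real.log r < β := EReal.coe_lt_coe_iff.1 hrf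
      have hmul : β * Real.log r < Real.log ((μ (ball y r)).toReal) :=
        (div_lt_iff_of_neg hlogr).1 hlt
      have hrb : r ^ β < (μ (ball y r)).toReal := by
        refine (Real.log_lt_log_iff (Real.rpow_pos_of_pos hr.1 β) ht).1 ?_
        rwa [Real.log_rpow hr.1]
      rw [← ENNReal.ofReal_toReal htop]
      exact (ENNReal.ofReal_lt_ofReal_iff ht).2 hrb
  · exact absurd hy not_top_lt

lemma locDim_le_of_mem_Uset (μ : Measure ℝ) {x β : ℝ} (hβ : 0 ≤ β)
    (h : ∀ δ : ℝ, 0 < δ → x ∈ Uset μ β δ) : locDim μ x ≤ (β : EReal) := by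
  have hpos : ∀ r : ℝ, 0 < r → 0 < μ (ball x r) := by
    intro r hr
    obtain ⟨r', hr'0, hr'r, hr'μ⟩ := h r hr
    calc (0:ℝ≥0∞) ≤ ENNReal.ofReal (r' ^ β) := zero_le
    _ < μ (ball x r') := hr'μ
    _ ≤ μ (ball x r) := measure_mono (ball_subset_ball hr'r.le)
  rw [locDim, if_pos hpos]
  refine Filter.liminf_le_of_frequently_le ?_ (by isBoundedDefault)
  rw [Filter.frequently_iff]
  intro U hU
  obtain ⟨u, hu, hsub⟩ := mem_nhdsGT_iff_exists_Ioo_subset.1 hU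
  have hδ : 0 < min u 1 := lt_min hu one_pos
  obtain ⟨r, hr0, hrδ, hrμ⟩ := h (min u 1) hδ
  refine ⟨r, hsub ⟨hr0, lt_of_lt_of_le hrδ (min_le_left _ _)⟩, ?_⟩
  have hr1 : r < 1 := lt_of_lt_of_le hrδ (min_le_right _ _)
  have hlogr : Real.log r < 0 := Real.log_neg hr0 hr1
  rcases eq_or_ne (μ (ball x r)) ⊤ with htop | htop
  · simp only [htop, ENNReal.toReal_top, Real.log_zero, zero_div]
    exact_mod_cast hβ
  · have ht : 0 < (μ (ball x r)).toReal := ENNReal.toReal_pos (hpos r hr0).ne' htop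
    have hrb : r ^ β < (μ (ball x r)).toReal :=
      (ENNReal.ofReal_lt_iff_lt_toReal (Real.rpow_nonneg hr0.le β) htop).1 hrμ
    have hlog : β * Real.log r < Real.log ((μ (ball x r)).toReal) := by
      rw [← Real.log_rpow hr0]
      exact (Real.log_lt_log_iff (Real.rpow_pos_of_pos hr0 β) ht).2 hrb
    have hfin : Real.log ((μ (ball x r)).toReal) / Real.log r < β :=
      (div_lt_iff_of_neg hlogr).2 hlog
    exact_mod_cast hfin.le

lemma ereal_le_of_forall_le (a : EReal) (c : ℝ)
    (h : ∀ n : ℕ, a ≤ ((c + 1/(n+1) : ℝ) : EReal)) : a ≤ (c : EReal) := by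
  by_contra hcon
  push_neg at hcon
  obtain ⟨b, hb1, hb2⟩ := exists_between hcon
  have hbt : b ≠ ⊤ := ne_top_of_lt hb2
  have hbb : b ≠ ⊥ := ne_bot_of_gt hb1
  have hbc : ((b.toReal : ℝ) : EReal) = b := EReal.coe_toReal hbt hbb
  have hcb : c < b.toReal := by
    rw [← hbc] at hb1; exact_mod_cast hb1
  obtain ⟨n, hn⟩ := exists_nat_one_div_lt (sub_pos.2 hcb)
  have hlt : ((c + 1/(n+1) : ℝ) : EReal) < b := by
    rw [← hbc]
    exact_mod_cast (by linarith : c + 1/((n:ℝ)+1) < b.toReal)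
  exact absurd ((h n).trans_lt (hlt.trans hb2)) (lt_irrefl a)

/-- If `μ` is a non-atomic measure supported on `[0,1]`, `0 ≤ α < 1`,
`{x : h_μ(x) ≤ α + ε}` is dense in `[0,1]` for every `ε > 0`,
and `h_μ(x) ≥ α` for all `x ∈ [0,1]`, then `E_μ(α) = {x : h_μ(x) = α}` is dense in `[0,1]`. -/
theorem level_set_dense (μ : Measure ℝ) [NullSingletonClass μ]
    (hsupp : μ (Set.Icc (0:ℝ) 1)ᶜ = 0)
    (α : ℝ) (hα0 : 0 ≤ α) (hα1 : α < 1)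
    (hdense : ∀ ε : ℝ, 0 < ε →
      Set.Icc (0:ℝ) 1 ⊆ closure {x ∈ Set.Icc (0:ℝ) 1 | locDim μ x ≤ ((α + ε : ℝ) : EReal)})
    (hlow : ∀ x ∈ Set.Icc (0:ℝ) 1, (α : EReal) ≤ locDim μ x) :
    Set.Icc (0:ℝ) 1 ⊆ closure {x ∈ Set.Icc (0:ℝ) 1 | locDim μ x = (α : EReal)} := by
  set W : ℕ × ℕ → Set ℝ :=
    fun p => Uset μ (α + 1/((p.1:ℝ)+1)) (1/((p.2:ℝ)+1)) ∪ (Set.Icc (0:ℝ) 1)ᶜ with hWdef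
  have hWopen : ∀ p, IsOpen (W p) := fun p =>
    (isOpen_Uset μ _ _).union isClosed_Icc.isOpen_compl
  have hWdense : ∀ p, Dense (W p) := by
    rintro ⟨n, m⟩
    rw [dense_iff_inter_open]
    intro U hUopen hUne
    by_cases hsub : U ⊆ Set.Icc (0:ℝ) 1
    · obtain ⟨z, hz⟩ := hUne
      obtain ⟨ε, hε, hball⟩ := Metric.isOpen_iff.1 hUopen z hz
      have hz' : z ∈ Set.Icc (0:ℝ) 1 := hsub hz
      have hd := hdense (1/((n:ℝ)+2)) (by positivity) hz'
      obtain ⟨y, hyS, hyd⟩ := Metric.mem_closure_iff.1 hd ε hε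
      have hyU : y ∈ U := hball (by rwa [mem_ball, dist_comm])
      refine ⟨y, hyU, Or.inl ?_⟩
      refine mem_Uset_of_locDim_lt μ (by positivity) (lt_of_le_of_lt hyS.2 ?_)
      rw [EReal.coe_lt_coe_iff]
      have h1 : (0:ℝ) < (n:ℝ)+1 := by positivity
      have h2 : ((n:ℝ)+1) < (n:ℝ)+2 := by linarith
      linarith [one_div_lt_one_div_of_lt h1 h2]
    · obtain ⟨z, hzU, hzn⟩ := Set.not_subset.1 hsub
      exact ⟨z, hzU, Or.inr hzn⟩
  have hD : Dense (⋂ p, W p) := dense_iInter_of_isOpen hWopen hWdense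
  intro x hx
  rw [Metric.mem_closure_iff]
  intro ε hε
  have hab : max (x-ε) 0 < min (x+ε) 1 := by
    rcases hx with ⟨h0, h1⟩
    apply max_lt <;> apply lt_min <;> linarith
  obtain ⟨y, hyD, hyI⟩ := hD.exists_mem_open isOpen_Ioo (Set.nonempty_Ioo.2 hab)
  have hyIcc : y ∈ Set.Icc (0:ℝ) 1 :=
    ⟨(le_max_right _ _).trans hyI.1.le, hyI.2.le.trans (min_le_right _ _)⟩
  have hyU : ∀ n m : ℕ, y ∈ Uset μ (α + 1/((n:ℝ)+1)) (1/((m:ℝ)+1)) := by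
    intro n m
    rcases Set.mem_iInter.1 hyD (n, m) with h | h
    · exact h
    · exact absurd hyIcc h
  have hle : locDim μ y ≤ (α : EReal) := by
    refine ereal_le_of_forall_le _ _ (fun n => ?_)
    refine locDim_le_of_mem_Uset μ (by positivity) (fun δ hδ => ?_)
    obtain ⟨m, hm⟩ := exists_nat_one_div_lt hδ
    obtain ⟨r, h1, h2, h3⟩ := hyU n m
    exact ⟨r, h1, h2.trans hm, h3⟩
  refine ⟨y, ⟨hyIcc, le_antisymm hle (hlow y hyIcc)⟩, ?_⟩
  rw [Real.dist_eq, abs_lt]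
  have ha : x - ε ≤ max (x-ε) 0 := le_max_left _ _
  have hb : min (x+ε) 1 ≤ x + ε := min_le_left _ _
  constructor <;> [nlinarith [hyI.1, hyI.2]; nlinarith [hyI.1, hyI.2]]
end

section
/- Let μ be a Borel probability measure on [0,1], let 0 < β < 1 and set β' = (1+β)/2. Suppose that (x_i)_{i≥0}, (x̃_i)_{i≥0} are points of [0,1] and (r_i)_{i≥0}, (r̃_i)_{i≥0} are positive radii with r_0 > r̃_0 > r_1 > r̃_1 > ... such that for every i ≥ 1: (a) the closure of B(x_i, r_i) is contained in B(x̃_{i−1}, r̃_{i−1}/3), which is contained in B(x_{i−1}, r_{i−1}/3); (b) μ(B(x_i, r_i)) ≤ r_i^{β'}; (c) μ(B(x̃_{i−1}, r̃_{i−1})) = r̃_{i−1}^β; and (d) for every x in the closure of B(x_i, r_i/3) and every r > 0, if B(x,r) is not contained in B(x_i, r_i) but B(x,r) ⊂ B(x_{i−1}, r_{i−1}), then μ(B(x,r)) < 300·r^β. Then the radii tend to 0, the intersection of the closed balls closure(B(x_i,r_i)) is a single point x, and h_μ(x) = β. -/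
open MeasureTheory Metric Filter Set
open scoped ENNReal Topology
open Classical

/-- triangle-inequality helper for balls in a metric space -/
lemma ball_subset_ball_of_mem {z c : ℝ} {ρ s t : ℝ} (h1 : z ∈ ball c s)
    (h2 : ρ + s ≤ t) : ball z ρ ⊆ ball c t := by
  intro y hy
  rw [mem_ball] at *
  calc dist y c ≤ dist y z + dist z c := dist_triangle _ _ _
    _ < ρ + s := by exact add_lt_add hy h1
    _ ≤ t := h2

lemma tendsto_const_div_atBot' {α : Type*} {f : α → ℝ} {l : Filter α}
    (h : Tendsto f l atBot) (C : ℝ) : Tendsto (fun x => C / f x) l (𝓝 0) := by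
  have h1 : Tendsto (fun x => -f x) l atTop := tendsto_neg_atTop_iff.mpr h
  have h2 := h1.const_div_atTop C
  have h3 := h2.neg
  simp only [div_neg, neg_neg, neg_zero] at h3
  exact h3


/-- Key lemma in the proof of the Darboux theorem: given a Borel probability measure `μ` on
`[0,1]`, `0 < β < 1`, `β' = (1+β)/2`, and interleaved sequences of balls
`B(x₀,r₀) ⊃ B(x̃₀,r̃₀) ⊃ B(x₁,r₁) ⊃ …` satisfying the nesting, upper-bound, equality and
maximal-type conditions (P0)-(P3), the radii tend to `0`, the closed balls intersect in a
single point `z`, and `h_μ(z) = β`. -/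
theorem nested_balls_exponent (μ : Measure ℝ) [IsProbabilityMeasure μ]
    (β : ℝ) (hβ0 : 0 < β) (hβ1 : β < 1)
    (x xt : ℕ → ℝ) (r rt : ℕ → ℝ)
    (hx : ∀ i, x i ∈ Set.Icc (0:ℝ) 1) (hxt : ∀ i, xt i ∈ Set.Icc (0:ℝ) 1)
    (hrpos : ∀ i, 0 < r i) (hrtpos : ∀ i, 0 < rt i)
    (hdec1 : ∀ i, rt i < r i) (hdec2 : ∀ i, r (i + 1) < rt i)
    (ha1 : ∀ i, closure (ball (x (i + 1)) (r (i + 1))) ⊆ ball (xt i) (rt i / 3))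
    (ha2 : ∀ i, ball (xt i) (rt i / 3) ⊆ ball (x i) (r i / 3))
    (hb : ∀ i, μ (ball (x (i + 1)) (r (i + 1)))
      ≤ ENNReal.ofReal (r (i + 1) ^ ((1 + β) / 2)))
    (hc : ∀ i, μ (ball (xt i) (rt i)) = ENNReal.ofReal (rt i ^ β))
    (hd : ∀ i, ∀ y ∈ closure (ball (x (i + 1)) (r (i + 1) / 3)), ∀ ρ : ℝ, 0 < ρ →
      ¬ ball y ρ ⊆ ball (x (i + 1)) (r (i + 1)) → ball y ρ ⊆ ball (x i) (r i) →
      μ (ball y ρ) < ENNReal.ofReal (300 * ρ ^ β)) :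
    Filter.Tendsto r Filter.atTop (nhds 0) ∧ Filter.Tendsto rt Filter.atTop (nhds 0) ∧
    ∃ z : ℝ, (⋂ i, closure (ball (x i) (r i))) = {z} ∧ locDim μ z = (β : EReal) := by
  -- step 1 : r (i+1) < r i / 3
  have hstep : ∀ i, r (i + 1) < r i / 3 := by
    intro i
    have hsub : closure (ball (x (i + 1)) (r (i + 1))) ⊆ ball (x i) (r i / 3) :=
      (ha1 i).trans (ha2 i)
    have hcl : closure (ball (x (i + 1)) (r (i + 1)))
        = closedBall (x (i + 1)) (r (i + 1)) := closure_ball _ (hrpos (i+1)).ne'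
    have hplus : x (i + 1) + r (i + 1) ∈ closedBall (x (i + 1)) (r (i + 1)) := by
      rw [mem_closedBall, Real.dist_eq]
      have : x (i + 1) + r (i + 1) - x (i + 1) = r (i + 1) := by ring
      rw [this]
      exact (abs_of_nonneg (hrpos (i+1)).le).le
    have hminus : x (i + 1) - r (i + 1) ∈ closedBall (x (i + 1)) (r (i + 1)) := by
      rw [mem_closedBall, Real.dist_eq]
      have : x (i + 1) - r (i + 1) - x (i + 1) = -(r (i + 1)) := by ring
      rw [this, abs_neg]
      exact (abs_of_nonneg (hrpos (i+1)).le).le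
    have hmp := hsub (hcl ▸ hplus)
    have hmm := hsub (hcl ▸ hminus)
    rw [mem_ball, Real.dist_eq, abs_lt] at hmp hmm
    linarith [hmp.2, hmm.1]
  -- step 2 : geometric decay
  have hgeo : ∀ i, r i ≤ r 0 * (1/3 : ℝ) ^ i := by
    intro i
    induction i with
    | zero => simp
    | succ n ih =>
        have := hstep n
        have h3 : (1/3 : ℝ) ^ (n+1) = (1/3) ^ n / 3 := by ring
        rw [h3]
        calc r (n+1) ≤ r n / 3 := this.le
          _ ≤ (r 0 * (1/3)^n) / 3 := by linarith
          _ = r 0 * ((1/3)^n / 3) := by ring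
  have htendr : Tendsto r atTop (𝓝 0) := by
    apply squeeze_zero (fun i => (hrpos i).le) hgeo
    have := (tendsto_pow_atTop_nhds_zero_of_lt_one (by norm_num : (0:ℝ) ≤ 1/3)
      (by norm_num : (1/3 : ℝ) < 1)).const_mul (r 0)
    simpa using this
  have htendrt : Tendsto rt atTop (𝓝 0) := by
    exact squeeze_zero (fun i => (hrtpos i).le) (fun i => (hdec1 i).le) htendr
  refine ⟨htendr, htendrt, ?_⟩
  -- step 3 : intersection point
  set K : ℕ → Set ℝ := fun i => closure (ball (x i) (r i)) with hK
  have hKcl : ∀ i, K i = closedBall (x i) (r i) := fun i => closure_ball _ (hrpos i).ne'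
  have hKdec : ∀ i, K (i+1) ⊆ K i := by
    intro i
    refine (ha1 i).trans ((ha2 i).trans ?_)
    refine (ball_subset_ball ?_).trans subset_closure
    linarith [hrpos i]
  have hKne : ∀ i, (K i).Nonempty := fun i => ⟨x i, subset_closure (mem_ball_self (hrpos i))⟩
  obtain ⟨z, hz⟩ := IsCompact.nonempty_iInter_of_sequence_nonempty_isCompact_isClosed
    K hKdec hKne (by rw [hKcl 0]; exact isCompact_closedBall _ _) (fun i => isClosed_closure)
  have hzK : ∀ i, z ∈ K i := fun i => mem_iInter.1 hz i
  have hsingle : (⋂ i, closure (ball (x i) (r i))) = {z} := by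
    apply Set.eq_singleton_iff_unique_mem.2
    refine ⟨hz, ?_⟩
    intro w hw
    have hb2 : ∀ i, |w - z| ≤ 2 * r i := by
      intro i
      have hw' : w ∈ closedBall (x i) (r i) := (hKcl i) ▸ (mem_iInter.1 hw i)
      have hz' : z ∈ closedBall (x i) (r i) := (hKcl i) ▸ hzK i
      rw [mem_closedBall, Real.dist_eq] at hw' hz'
      have : |w - z| ≤ |w - x i| + |z - x i| := by
        have := abs_sub (w - x i) (z - x i)
        calc |w - z| = |(w - x i) - (z - x i)| := by ring_nf
          _ ≤ |w - x i| + |z - x i| := abs_sub _ _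
      linarith
    have htt : Tendsto (fun i => 2 * r i) atTop (𝓝 (0:ℝ)) := by
      simpa using htendr.const_mul 2
    have h0 : |w - z| ≤ 0 := ge_of_tendsto' htt hb2
    have := abs_nonpos_iff.1 h0
    linarith [abs_nonneg (w - z), sub_eq_zero.1 this]
  refine ⟨z, hsingle, ?_⟩
  -- membership facts
  have hz3 : ∀ i, z ∈ ball (x i) (r i / 3) := fun i => ha2 i (ha1 i (hzK (i+1)))
  have hzt : ∀ i, z ∈ ball (xt i) (rt i / 3) := fun i => ha1 i (hzK (i+1))
  -- lower bound on measure of balls around z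
  have hlow : ∀ i, ball (xt i) (rt i) ⊆ ball z (2 * rt i) := by
    intro i
    have hz' : z ∈ ball (xt i) (rt i / 3) := hzt i
    rw [mem_ball, dist_comm] at hz'
    intro y hy
    rw [mem_ball] at hy ⊢
    calc dist y z ≤ dist y (xt i) + dist (xt i) z := dist_triangle _ _ _
      _ < rt i + rt i / 3 := add_lt_add hy hz'
      _ ≤ 2 * rt i := by linarith [hrtpos i]
  have hpos : ∀ ρ : ℝ, 0 < ρ → 0 < μ (ball z ρ) := by
    intro ρ hρ
    obtain ⟨i, hi⟩ := (htendrt.eventually_lt_const (by linarith : (0:ℝ) < ρ/2)).exists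
    have hsub : ball (xt i) (rt i) ⊆ ball z ρ :=
      (hlow i).trans (ball_subset_ball (by linarith))
    calc (0 : ℝ≥0∞) < ENNReal.ofReal (rt i ^ β) := by
          rw [ENNReal.ofReal_pos]; exact Real.rpow_pos_of_pos (hrtpos i) β
      _ = μ (ball (xt i) (rt i)) := (hc i).symm
      _ ≤ μ (ball z ρ) := measure_mono hsub
  rw [locDim, if_pos hpos]
  -- key upper bound on the measure of small balls around z
  have hkey : ∀ ρ : ℝ, 0 < ρ → ρ ≤ 1 → ρ ≤ 2 * r 1 / 3 →
      μ (ball z ρ) ≤ ENNReal.ofReal (300 * ρ ^ β) := by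
    intro ρ hρ hρ1 hρr
    have hex : ∃ n, 2 * r n / 3 < ρ := by
      have : ∀ᶠ n in atTop, r n < 3 * ρ / 2 :=
        htendr.eventually_lt_const (by linarith)
      exact this.exists.imp (fun n hn => by linarith)
    haveI : DecidablePred fun n => 2 * r n / 3 < ρ := Classical.decPred _
    set N := Nat.find hex with hNdef
    have hN : 2 * r N / 3 < ρ := Nat.find_spec hex
    have hN2 : 1 < N := by
      rw [hNdef, Nat.lt_find_iff]
      intro m hm
      interval_cases m
      · have := hstep 0
        have := hdec1 0
        have := hdec2 0
        push_neg
        linarith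
      · push_neg; linarith
    set i := N - 1 with hidef
    have hiN : i + 1 = N := by omega
    have hi1 : 1 ≤ i := by omega
    have hρi : ρ ≤ 2 * r i / 3 := by
      have := Nat.find_min hex (show i < N by omega)
      push_neg at this
      exact this
    have hri1 : r (i + 1) < 3 * ρ / 2 := by rw [hiN]; linarith
    have hzcl : z ∈ closure (ball (x (i+1)) (r (i+1) / 3)) := subset_closure (hz3 (i+1))
    by_cases hsub : ball z ρ ⊆ ball (x (i+1)) (r (i+1))
    · have hchain : r (i+1) ^ ((1+β)/2) ≤ 300 * ρ ^ β := by
        have hβ' : β ≤ (1+β)/2 := by linarith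
        have hβ'1 : (1+β)/2 ≤ 1 := by linarith
        have hβ'0 : (0:ℝ) ≤ (1+β)/2 := by linarith
        calc r (i+1) ^ ((1+β)/2) ≤ (3 * ρ / 2) ^ ((1+β)/2) :=
              Real.rpow_le_rpow (hrpos (i+1)).le hri1.le hβ'0
          _ = (3/2 : ℝ) ^ ((1+β)/2) * ρ ^ ((1+β)/2) := by
              rw [← Real.mul_rpow (by norm_num) hρ.le]; ring_nf
          _ ≤ (3/2 : ℝ) * ρ ^ β := by
              have h1 : (3/2 : ℝ) ^ ((1+β)/2) ≤ (3/2 : ℝ) ^ (1:ℝ) :=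
                Real.rpow_le_rpow_of_exponent_le (by norm_num) hβ'1
              have h2 : ρ ^ ((1+β)/2) ≤ ρ ^ β :=
                Real.rpow_le_rpow_of_exponent_ge hρ hρ1 hβ'
              have h3 : (0:ℝ) ≤ ρ ^ ((1+β)/2) := (Real.rpow_pos_of_pos hρ _).le
              have h4 : (0:ℝ) < (3/2 : ℝ) ^ ((1+β)/2) := Real.rpow_pos_of_pos (by norm_num) _
              rw [Real.rpow_one] at h1
              nlinarith
          _ ≤ 300 * ρ ^ β := by
              have : (0:ℝ) < ρ ^ β := Real.rpow_pos_of_pos hρ β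
              nlinarith
      calc μ (ball z ρ) ≤ μ (ball (x (i+1)) (r (i+1))) := measure_mono hsub
        _ ≤ ENNReal.ofReal (r (i+1) ^ ((1+β)/2)) := hb i
        _ ≤ ENNReal.ofReal (300 * ρ ^ β) := ENNReal.ofReal_le_ofReal hchain
    · have houter : ball z ρ ⊆ ball (x i) (r i) :=
        ball_subset_ball_of_mem (hz3 i) (by linarith)
      exact (hd i z hzcl ρ hρ hsub houter).le
  -- now compute the liminf
  apply le_antisymm
  · rw [Filter.liminf_le_iff]
    -- liminf ≤ β : along the sequence ρ n = 2 * rt n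
    intro b hbβ
    obtain ⟨c, hβc, hcb⟩ := EReal.exists_between_coe_real hbβ
    have hβc' : β < c := by exact_mod_cast hβc
    have htend2 : Tendsto (fun n => 2 * rt n) atTop (𝓝[>] (0:ℝ)) := by
      rw [tendsto_nhdsWithin_iff]
      constructor
      · simpa using htendrt.const_mul 2
      · exact Eventually.of_forall (fun n => by
          simp only [mem_Ioi]; linarith [hrtpos n])
    have hlogtend : Tendsto (fun n => Real.log (2 * rt n)) atTop atBot :=
      Real.tendsto_log_nhdsGT_zero.comp htend2
    have hfrac : Tendsto (fun n => β - β * Real.log 2 / Real.log (2 * rt n)) atTop (𝓝 β) := by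
      have h0 : Tendsto (fun n => β * Real.log 2 / Real.log (2 * rt n)) atTop (𝓝 0) :=
        tendsto_const_div_atBot' hlogtend _
      simpa using tendsto_const_nhds.sub h0
    have hev : ∀ᶠ n in atTop,
        ((Real.log ((μ (ball z (2 * rt n))).toReal) / Real.log (2 * rt n) : ℝ) : EReal) < b := by
      have hsmall : ∀ᶠ n in atTop, 2 * rt n < 1 :=
        (htendrt.const_mul 2).eventually_lt_const (by simpa using one_pos)
      have hclose := hfrac.eventually_lt_const hβc'
      filter_upwards [hsmall, hclose] with n h1 h2
      set ρ := 2 * rt n with hρdef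
      have hρ0 : 0 < ρ := by have := hrtpos n; positivity
      have hL : Real.log ρ < 0 := Real.log_neg hρ0 h1
      have hLne : Real.log ρ ≠ 0 := ne_of_lt hL
      -- measure lower bound
      have hmge : rt n ^ β ≤ (μ (ball z ρ)).toReal := by
        have h3 : ENNReal.ofReal (rt n ^ β) ≤ μ (ball z ρ) := by
          rw [← hc n]; exact measure_mono (hlow n)
        have h4 := ENNReal.toReal_mono (measure_ne_top μ _) h3
        rwa [ENNReal.toReal_ofReal (Real.rpow_pos_of_pos (hrtpos n) β).le] at h4
      have hlogm : β * (Real.log ρ - Real.log 2) ≤ Real.log ((μ (ball z ρ)).toReal) := by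
        have h5 : Real.log (rt n ^ β) ≤ Real.log ((μ (ball z ρ)).toReal) :=
          Real.log_le_log (Real.rpow_pos_of_pos (hrtpos n) β) hmge
        rw [Real.log_rpow (hrtpos n)] at h5
        have h6 : Real.log ρ = Real.log 2 + Real.log (rt n) := by
          rw [hρdef, Real.log_mul (by norm_num) (hrtpos n).ne']
        nlinarith [h5, h6]
      have hreal : Real.log ((μ (ball z ρ)).toReal) / Real.log ρ < c := by
        rw [div_lt_iff_of_neg hL]
        have h7 : (β - β * Real.log 2 / Real.log ρ) * Real.log ρ
            = β * Real.log ρ - β * Real.log 2 := by field_simp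
        have h8 := mul_lt_mul_of_neg_right h2 hL
        rw [h7] at h8
        nlinarith [hlogm]
      calc ((Real.log ((μ (ball z ρ)).toReal) / Real.log ρ : ℝ) : EReal)
          < (c : EReal) := by exact_mod_cast hreal
        _ < b := hcb
    exact htend2.frequently hev.frequently
  · -- β ≤ liminf
    rw [Filter.le_liminf_iff]
    intro b hbβ
    obtain ⟨c, hbc, hcβ⟩ := EReal.exists_between_coe_real hbβ
    have hcβ' : c < β := by exact_mod_cast hcβ
    set δ := min 1 (2 * r 1 / 3) with hδdef
    have hδ0 : 0 < δ := lt_min one_pos (by linarith [hrpos 1])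
    have hmem : Ioo (0:ℝ) δ ∈ 𝓝[>] (0:ℝ) := Ioo_mem_nhdsGT_of_mem ⟨le_refl 0, hδ0⟩
    have hlogtend : Tendsto Real.log (𝓝[>] (0:ℝ)) atBot :=
      Real.tendsto_log_nhdsGT_zero
    have hfrac : Tendsto (fun ρ => β + Real.log 300 / Real.log ρ) (𝓝[>] (0:ℝ)) (𝓝 β) := by
      have h0 : Tendsto (fun ρ => Real.log 300 / Real.log ρ) (𝓝[>] (0:ℝ)) (𝓝 0) :=
        tendsto_const_div_atBot' hlogtend _
      simpa using tendsto_const_nhds.add h0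
    have hclose := hfrac.eventually_const_lt hcβ'
    filter_upwards [hmem, hclose] with ρ hρmem h2
    obtain ⟨hρ0, hρδ⟩ := hρmem
    have hρ1 : ρ < 1 := lt_of_lt_of_le hρδ (min_le_left _ _)
    have hρr : ρ ≤ 2 * r 1 / 3 := le_of_lt (lt_of_lt_of_le hρδ (min_le_right _ _))
    have hL : Real.log ρ < 0 := Real.log_neg hρ0 hρ1
    have hμle := hkey ρ hρ0 hρ1.le hρr
    have hm0 : 0 < (μ (ball z ρ)).toReal :=
      ENNReal.toReal_pos (hpos ρ hρ0).ne' (measure_ne_top μ _)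
    have hmle : (μ (ball z ρ)).toReal ≤ 300 * ρ ^ β :=
      ENNReal.toReal_le_of_le_ofReal (by positivity) hμle
    have hlogm : Real.log ((μ (ball z ρ)).toReal) ≤ Real.log 300 + β * Real.log ρ := by
      have h5 : Real.log ((μ (ball z ρ)).toReal) ≤ Real.log (300 * ρ ^ β) :=
        Real.log_le_log hm0 hmle
      rwa [Real.log_mul (by norm_num) (Real.rpow_pos_of_pos hρ0 β).ne',
        Real.log_rpow hρ0] at h5
    have hLne : Real.log ρ ≠ 0 := ne_of_lt hL
    have hreal : c < Real.log ((μ (ball z ρ)).toReal) / Real.log ρ := by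
      rw [lt_div_iff_of_neg hL]
      have h7 : (β + Real.log 300 / Real.log ρ) * Real.log ρ
          = β * Real.log ρ + Real.log 300 := by field_simp
      have h8 := mul_lt_mul_of_neg_right h2 hL
      rw [h7] at h8
      nlinarith [hlogm]
    calc b < (c : EReal) := hbc
      _ < ((Real.log ((μ (ball z ρ)).toReal) / Real.log ρ : ℝ) : EReal) := by
          exact_mod_cast hreal
end

section
/- There exists a strictly monotone increasing function Z : [0,1] → [0,1] whose pointwise Hölder exponent satisfies h_Z(x) = 1 for every x ∈ [0,1]. (In particular Z is homogeneously multifractal, with spectrum d_Z(1) = 1 and d_Z(h) = −∞ for h ≠ 1.) -/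
open MeasureTheory Metric Filter Set
open scoped ENNReal Topology
open Classical

/-- `Z ∈ C^α(x₀)`: there are a polynomial `P` of degree less than `α` and a constant `C > 0`
such that `|Z x - P (x - x₀)| ≤ C |x - x₀| ^ α` in a neighborhood of `x₀`. -/
def HolderAt (Z : ℝ → ℝ) (α : ℝ) (x₀ : ℝ) : Prop :=
  ∃ (P : Polynomial ℝ) (C δ : ℝ), 0 < C ∧ 0 < δ ∧
    (P = 0 ∨ (P.natDegree : ℝ) < α) ∧
    ∀ x : ℝ, |x - x₀| < δ → |Z x - P.eval (x - x₀)| ≤ C * |x - x₀| ^ α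

/-- The pointwise Hölder exponent `h_Z(x₀) = sup {α ≥ 0 : Z ∈ C^α(x₀)}`. -/
noncomputable def holderExp (Z : ℝ → ℝ) (x₀ : ℝ) : EReal :=
  sSup {h : EReal | ∃ α : ℝ, 0 ≤ α ∧ HolderAt Z α x₀ ∧ h = (α : EReal)}

/-- The multifractal spectrum of a function on `[0,1]`:
`d_Z(h) = dim_H {x ∈ [0,1] : h_Z(x) = h}`, with `dim ∅ = -∞`. -/
noncomputable def specF (Z : ℝ → ℝ) (h : EReal) : EReal :=
  dimHE {x ∈ Set.Icc (0:ℝ) 1 | holderExp Z x = h}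

/-- A function on `[0,1]` is homogeneously multifractal (HM) if its restriction to any
non-degenerate subinterval of `[0,1]` has the same multifractal spectrum as `Z` itself. -/
def IsHMF (Z : ℝ → ℝ) : Prop :=
  ∀ a b : ℝ, 0 ≤ a → a < b → b ≤ 1 →
    ∀ h : EReal, dimHE {x ∈ Set.Ioo a b | holderExp Z x = h} = specF Z h

/-- The class `𝓕` of admissible spectra: suprema of countably many step functions `f_n`,
each supported by a closed subinterval `Iₙ ⊆ [0,1]`, bounded away from `0` uniformly,
constant (with value `vₙ ∈ [0,1]`) on `Iₙ`, with `fₙ(x) ≤ x` on `Iₙ`, and `f = sup_n fₙ`. -/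
def MemF (f : ℝ → EReal) : Prop :=
  ∃ (I : ℕ → Set ℝ) (v : ℕ → EReal),
    (∀ n, ∃ a b : ℝ, a ≤ b ∧ I n = Set.Icc a b) ∧
    (∀ n, I n ⊆ Set.Icc (0:ℝ) 1) ∧
    (∃ c : ℝ, 0 < c ∧ ∀ n, ∀ x ∈ I n, c ≤ x) ∧
    (∀ n, 0 ≤ v n ∧ v n ≤ 1) ∧
    (∀ n, ∀ x ∈ I n, v n ≤ (x : EReal)) ∧
    (∀ x : ℝ, f x = ⨆ n, (if x ∈ I n then v n else ⊥))

noncomputable def saw (x : ℝ) : ℝ := |x - round x|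

lemma saw_nonneg (x : ℝ) : 0 ≤ saw x := abs_nonneg _

lemma saw_le_half (x : ℝ) : saw x ≤ 1/2 := by
  simpa [saw] using abs_sub_round x

lemma saw_intCast (n : ℤ) : saw (n : ℝ) = 0 := by
  simp [saw]

lemma round_eq_of_abs_sub_lt_half {x : ℝ} {m : ℤ} (h : |x - m| < 1/2) : round x = m := by
  rw [round_eq]
  have h1 : -(1/2) < x - m := neg_lt_of_abs_lt h
  have h2 : x - m < 1/2 := lt_of_abs_lt h
  have : (m : ℝ) ≤ x + 1/2 := by linarith
  have h4 : x + 1/2 < m + 1 := by push_cast; linarith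
  exact_mod_cast Int.floor_eq_iff.2 ⟨by exact_mod_cast this, by exact_mod_cast h4⟩

lemma saw_le_abs_sub (x : ℝ) (m : ℤ) : saw x ≤ |x - m| := by
  rcases lt_or_ge (|x - m|) (1/2) with h | h
  · rw [saw, round_eq_of_abs_sub_lt_half h]
  · exact (saw_le_half x).trans h

lemma saw_lipschitz (x y : ℝ) : |saw x - saw y| ≤ |x - y| := by
  have h1 : saw x - saw y ≤ |x - y| := by
    have := saw_le_abs_sub x (round y)
    have h2 : |x - (round y : ℝ)| ≤ |x - y| + |y - round y| := by
      have := abs_sub_le x y (round y); linarith [this]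
    simp only [saw] at *
    linarith
  have h2 : saw y - saw x ≤ |x - y| := by
    have := saw_le_abs_sub y (round x)
    have h3 : |y - (round x : ℝ)| ≤ |y - x| + |x - round x| := abs_sub_le y x (round x)
    rw [abs_sub_comm y x] at h3
    simp only [saw] at *
    linarith
  rw [abs_sub_le_iff]; constructor <;> linarith

lemma saw_add_half (n : ℤ) : saw ((n : ℝ) + 1/2) = 1/2 := by
  have : round ((n:ℝ) + 1/2) = n + 1 := by
    rw [round_eq]
    have : (n:ℝ) + 1/2 + 1/2 = ((n+1 : ℤ) : ℝ) := by push_cast; ring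
    rw [this, Int.floor_intCast]
  rw [saw, this]
  push_cast
  rw [abs_of_nonpos] <;> linarith

/-- On `[j/2,(j+1)/2]`, `saw` is given by an explicit affine formula. -/
lemma saw_formula (j : ℤ) (y : ℝ) (h1 : (j:ℝ)/2 ≤ y) (h2 : y ≤ ((j:ℝ)+1)/2) :
    saw y = if Even j then y - (j:ℝ)/2 else ((j:ℝ)+1)/2 - y := by
  rcases Int.even_or_odd j with ⟨m, hm⟩ | ⟨m, hm⟩
  · subst hm
    rw [if_pos ⟨m, rfl⟩]
    push_cast at h1 h2 ⊢
    have hy1 : (m:ℝ) ≤ y := by linarith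
    have hy2 : y ≤ (m:ℝ) + 1/2 := by linarith
    rcases eq_or_lt_of_le hy2 with he | hl
    · rw [he, saw_add_half]; ring
    · have : round y = m := round_eq_of_abs_sub_lt_half (by rw [abs_sub_lt_iff]; constructor <;> linarith)
      rw [saw, this, abs_of_nonneg (by linarith)]; ring
  · subst hm
    rw [if_neg (by simp [Int.even_add_one, parity_simps])]
    push_cast at h1 h2 ⊢
    have hy1 : (m:ℝ) + 1/2 ≤ y := by linarith
    have hy2 : y ≤ (m:ℝ) + 1 := by linarith
    rcases eq_or_lt_of_le hy1 with he | hl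
    · rw [← he, saw_add_half]; ring
    · have : round y = m + 1 := round_eq_of_abs_sub_lt_half (by push_cast; rw [abs_sub_lt_iff]; constructor <;> linarith)
      rw [saw, this]; push_cast
      rw [abs_of_nonpos (by linarith)]; ring

/-- Midpoint identity on a half-period interval. -/
lemma saw_midpoint (j : ℤ) (a b : ℝ) (ha : (j:ℝ)/2 ≤ a) (hb : b ≤ ((j:ℝ)+1)/2) (hab : a ≤ b) :
    saw a + saw b - 2 * saw ((a+b)/2) = 0 := by
  have hm1 : (j:ℝ)/2 ≤ (a+b)/2 := by linarith
  have hm2 : (a+b)/2 ≤ ((j:ℝ)+1)/2 := by linarith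
  rw [saw_formula j a ha (by linarith), saw_formula j b (by linarith) hb,
    saw_formula j _ hm1 hm2]
  by_cases h : Even j <;> simp [h] <;> ring

noncomputable def cf (n : ℕ) : ℝ := (((n:ℝ)+1) * ((n:ℝ)+2) * 4)⁻¹

lemma cf_pos (n : ℕ) : 0 < cf n := by
  unfold cf; positivity

lemma cf_le (n : ℕ) : cf n ≤ 1/4 := by
  unfold cf
  rw [inv_le_comm₀ (by positivity) (by norm_num)]
  nlinarith [Nat.cast_nonneg (α := ℝ) n]

/-- telescoping sum of `cf` -/
lemma hasSum_cf : HasSum cf (1/4) := by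
  have key : ∀ n : ℕ, cf n = (fun k : ℕ => ((k:ℝ)+1)⁻¹/4) n - (fun k : ℕ => ((k:ℝ)+1)⁻¹/4) (n+1) := by
    intro n
    have h1 : ((n:ℝ)+1) ≠ 0 := by positivity
    have h2 : ((n:ℝ)+2) ≠ 0 := by positivity
    push_cast
    rw [cf]
    field_simp
    ring
  have ht : Tendsto (fun k : ℕ => ((k:ℝ)+1)⁻¹/4) atTop (nhds 0) := by
    have := (tendsto_natCast_atTop_atTop (R := ℝ)).atTop_add tendsto_const_nhds (C := 1)
    have h := this.inv_tendsto_atTop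
    simpa using h.div_const 4
  rw [hasSum_iff_tendsto_nat_of_nonneg (fun n => (by unfold cf; positivity : (0:ℝ) ≤ cf n))]
  have heq : ∀ N : ℕ, ∑ n ∈ Finset.range N, cf n = 1/4 - ((N:ℝ)+1)⁻¹/4 := by
    intro N
    have := Finset.sum_range_sub' (f := fun k : ℕ => ((k:ℝ)+1)⁻¹/4) (n := N)
    rw [Finset.sum_congr rfl (fun n _ => key n), this]
    norm_num
  simp only [heq]
  have : Tendsto (fun N : ℕ => 1/4 - ((N:ℝ)+1)⁻¹/4) atTop (nhds (1/4 - 0)) :=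
    tendsto_const_nhds.sub ht
  simpa using this

noncomputable def gW (n : ℕ) (x : ℝ) : ℝ := cf n * ((2:ℝ)^n)⁻¹ * saw ((2:ℝ)^n * x)

lemma gW_nonneg (n : ℕ) (x : ℝ) : 0 ≤ gW n x :=
  mul_nonneg (mul_nonneg (cf_pos n).le (by positivity)) (saw_nonneg _)

lemma gW_le (n : ℕ) (x : ℝ) : gW n x ≤ (1/2)^n := by
  have h1 : saw ((2:ℝ)^n * x) ≤ 1/2 := saw_le_half _
  have h2 : cf n ≤ 1/4 := cf_le n
  have h3 : (0:ℝ) < ((2:ℝ)^n)⁻¹ := by positivity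
  calc cf n * ((2:ℝ)^n)⁻¹ * saw ((2:ℝ)^n * x) ≤ 1 * ((2:ℝ)^n)⁻¹ * 1 := by
        apply mul_le_mul
        · apply mul_le_mul_of_nonneg_right (h2.trans (by norm_num)) h3.le
        · exact h1.trans (by norm_num)
        · exact saw_nonneg _
        · positivity
    _ = (1/2)^n := by rw [one_mul, mul_one, one_div, inv_pow]

lemma summable_gW (x : ℝ) : Summable (fun n => gW n x) :=
  Summable.of_nonneg_of_le (fun n => gW_nonneg n x) (fun n => gW_le n x)
    (summable_geometric_of_lt_one (by norm_num) (by norm_num))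

noncomputable def W (x : ℝ) : ℝ := ∑' n, gW n x

lemma W_lip (x y : ℝ) : |W x - W y| ≤ |x - y| / 4 := by
  have hsub : W x - W y = ∑' n, (gW n x - gW n y) :=
    (Summable.tsum_sub (summable_gW x) (summable_gW y)).symm
  have hbd : ∀ n, |gW n x - gW n y| ≤ cf n * |x - y| := by
    intro n
    have : gW n x - gW n y = cf n * ((2:ℝ)^n)⁻¹ * (saw ((2:ℝ)^n * x) - saw ((2:ℝ)^n * y)) := by
      unfold gW; ring
    rw [this, abs_mul, abs_of_nonneg (mul_nonneg (cf_pos n).le (by positivity : (0:ℝ) ≤ ((2:ℝ)^n)⁻¹))]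
    have h2 : |saw ((2:ℝ)^n * x) - saw ((2:ℝ)^n * y)| ≤ (2:ℝ)^n * |x - y| := by
      calc _ ≤ |(2:ℝ)^n * x - (2:ℝ)^n * y| := saw_lipschitz _ _
        _ = (2:ℝ)^n * |x - y| := by rw [← mul_sub, abs_mul, abs_of_nonneg (by positivity)]
    calc cf n * ((2:ℝ)^n)⁻¹ * |saw ((2:ℝ)^n * x) - saw ((2:ℝ)^n * y)|
        ≤ cf n * ((2:ℝ)^n)⁻¹ * ((2:ℝ)^n * |x - y|) := by
          apply mul_le_mul_of_nonneg_left h2 (mul_nonneg (cf_pos n).le (by positivity))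
      _ = cf n * |x - y| := by
          rw [mul_assoc, ← mul_assoc ((2:ℝ)^n)⁻¹, inv_mul_cancel₀ (by positivity), one_mul]
  have hsum2 : Summable (fun n => |gW n x - gW n y|) := by
    apply Summable.of_nonneg_of_le (fun n => abs_nonneg _) hbd
    exact hasSum_cf.summable.mul_right _
  calc |W x - W y| = |∑' n, (gW n x - gW n y)| := by rw [hsub]
    _ ≤ ∑' n, |gW n x - gW n y| := by
        have := norm_tsum_le_tsum_norm (f := fun n => gW n x - gW n y) (by
          simpa [Real.norm_eq_abs] using hsum2)
        simpa [Real.norm_eq_abs] using this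
    _ ≤ ∑' n, cf n * |x - y| := Summable.tsum_le_tsum hbd hsum2 (hasSum_cf.summable.mul_right _)
    _ = (1/4) * |x - y| := by rw [tsum_mul_right, hasSum_cf.tsum_eq]
    _ = |x - y| / 4 := by ring

lemma W_second_diff (N : ℕ) (k : ℤ) :
    W ((k:ℝ)/2^N) + W (((k:ℝ)+1)/2^N) - 2 * W ((2*(k:ℝ)+1)/2^(N+1))
      = -(cf N * ((2:ℝ)^N)⁻¹) := by
  set p0 : ℝ := (k:ℝ)/2^N with hp0
  set p2 : ℝ := ((k:ℝ)+1)/2^N with hp2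
  set p1 : ℝ := (2*(k:ℝ)+1)/2^(N+1) with hp1
  have hLHS : W p0 + W p2 - 2 * W p1 = ∑' n, (gW n p0 + gW n p2 - 2 * gW n p1) := by
    rw [Summable.tsum_sub ((summable_gW p0).add (summable_gW p2)) ((summable_gW p1).mul_left 2),
      Summable.tsum_add (summable_gW p0) (summable_gW p2), tsum_mul_left]
    rfl
  rw [hLHS]
  have hterm : ∀ n : ℕ, n ≠ N → gW n p0 + gW n p2 - 2 * gW n p1 = 0 := by
    intro n hn
    rcases lt_or_gt_of_ne hn with hlt | hgt
    · -- n < N : affine on a half-period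
      obtain ⟨M, hM⟩ : ∃ M : ℕ, N = n + (M + 1) := by
        obtain ⟨d, hd⟩ := Nat.exists_eq_add_of_lt hlt
        exact ⟨d, by omega⟩
      have h2M : (0:ℝ) < (2:ℝ)^(M+1) := by positivity
      have e0 : (2:ℝ)^n * p0 = (k:ℝ)/2^(M+1) := by
        rw [hp0, hM, pow_add]
        field_simp
      have e2 : (2:ℝ)^n * p2 = ((k:ℝ)+1)/2^(M+1) := by
        rw [hp2, hM, pow_add]
        field_simp
      have e1 : (2:ℝ)^n * p1 = ((2:ℝ)^n * p0 + (2:ℝ)^n * p2)/2 := by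
        rw [e0, e2, hp1, hM]
        have : (2:ℝ)^(n + (M+1) + 1) = 2^n * 2^(M+1) * 2 := by ring
        rw [this]
        field_simp
        ring
      set j : ℤ := ⌊(k:ℝ)/2^M⌋ with hj
      have h2Mpos : (0:ℝ) < (2:ℝ)^M := by positivity
      have hjle : (j:ℝ) * 2^M ≤ (k:ℝ) := by
        rw [← le_div_iff₀ h2Mpos]; exact Int.floor_le _
      have hjlt : (k:ℝ) < ((j:ℝ)+1) * 2^M := by
        rw [← div_lt_iff₀ h2Mpos]; exact Int.lt_floor_add_one _
      have ha : (j:ℝ)/2 ≤ (2:ℝ)^n * p0 := by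
        rw [e0, div_le_div_iff₀ (by norm_num : (0:ℝ) < 2) h2M, pow_succ]
        nlinarith [hjle]
      have hb : (2:ℝ)^n * p2 ≤ ((j:ℝ)+1)/2 := by
        rw [e2, div_le_div_iff₀ h2M (by norm_num : (0:ℝ) < 2)]
        -- k + 1 ≤ (j+1) * 2^M  (integers)
        have hint : k < (j+1) * 2^M := by
          exact_mod_cast (by push_cast; exact hjlt : (k:ℝ) < (((j+1) * 2^M : ℤ) : ℝ))
        have hint2 : k + 1 ≤ (j+1) * 2^M := hint
        have hR : ((k:ℝ)+1) ≤ ((j:ℝ)+1) * 2^M := by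
          have : ((k+1 : ℤ):ℝ) ≤ (((j+1) * 2^M : ℤ):ℝ) := Int.cast_le.mpr hint2
          push_cast at this
          linarith
        rw [pow_succ]
        nlinarith [hR]
      have hab : (2:ℝ)^n * p0 ≤ (2:ℝ)^n * p2 := by
        rw [e0, e2, div_le_div_iff₀ h2M h2M]
        nlinarith [h2M]
      have hmid := saw_midpoint j ((2:ℝ)^n * p0) ((2:ℝ)^n * p2) ha hb hab
      rw [← e1] at hmid
      unfold gW
      linear_combination (cf n * ((2:ℝ)^n)⁻¹) * hmid
    · -- n > N : all three points map to integers
      obtain ⟨d, hd⟩ : ∃ d : ℕ, n = N + (d + 1) := by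
        obtain ⟨e, he⟩ := Nat.exists_eq_add_of_lt hgt
        exact ⟨e, by omega⟩
      have e0 : (2:ℝ)^n * p0 = ((k * 2^(d+1) : ℤ) : ℝ) := by
        rw [hp0, hd, pow_add]; push_cast; field_simp
      have e2 : (2:ℝ)^n * p2 = (((k+1) * 2^(d+1) : ℤ) : ℝ) := by
        rw [hp2, hd, pow_add]; push_cast; field_simp
      have e1 : (2:ℝ)^n * p1 = (((2*k+1) * 2^d : ℤ) : ℝ) := by
        rw [hp1, hd]
        have : N + (d + 1) = (N+1) + d := by omega
        rw [this, pow_add]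
        push_cast; field_simp
      unfold gW
      rw [e0, e2, e1, saw_intCast, saw_intCast, saw_intCast]
      ring
  rw [tsum_eq_single N hterm]
  have e0 : (2:ℝ)^N * p0 = ((k:ℤ):ℝ) := by rw [hp0]; field_simp
  have e2 : (2:ℝ)^N * p2 = ((k+1:ℤ):ℝ) := by rw [hp2]; push_cast; field_simp
  have e1 : (2:ℝ)^N * p1 = (k:ℝ) + 1/2 := by
    rw [hp1, pow_succ]
    field_simp
  unfold gW
  rw [e0, e2, e1, saw_intCast, saw_intCast, saw_add_half]
  ring

noncomputable def Zf (x : ℝ) : ℝ := x + W x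


lemma poly_combo_bound (P : Polynomial ℝ) {t0 t1 t2 η : ℝ} (hη0 : 0 < η) (hη1 : η ≤ 1)
    (h0 : |t0| ≤ η) (h1 : |t1| ≤ η) (h2 : |t2| ≤ η) (hc : t0 + t2 - 2*t1 = 0) :
    |P.eval t0 + P.eval t2 - 2*P.eval t1|
      ≤ 4 * (∑ i ∈ Finset.range (P.natDegree+1), |P.coeff i|) * η^2 := by
  have hev : ∀ t : ℝ, P.eval t = ∑ i ∈ Finset.range (P.natDegree + 1), P.coeff i * t^i := by
    intro t; rw [Polynomial.eval_eq_sum_range]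
  rw [hev, hev, hev, ← Finset.sum_add_distrib, Finset.mul_sum, ← Finset.sum_sub_distrib]
  have hterm : ∀ i ∈ Finset.range (P.natDegree + 1),
      |P.coeff i * t0^i + P.coeff i * t2^i - 2 * (P.coeff i * t1^i)| ≤ |P.coeff i| * (4*η^2) := by
    intro i _
    match i with
    | 0 =>
      simp only [pow_zero, mul_one]
      have h : P.coeff 0 + P.coeff 0 - 2 * P.coeff 0 = 0 := by ring
      rw [h, abs_zero]; positivity
    | 1 =>
      have h : P.coeff 1 * t0^1 + P.coeff 1 * t2^1 - 2 * (P.coeff 1 * t1^1) = P.coeff 1 * (t0 + t2 - 2*t1) := by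
        ring
      rw [h, hc, mul_zero, abs_zero]; positivity
    | (m+2) =>
      have hb : ∀ t : ℝ, |t| ≤ η → |t^(m+2)| ≤ η^2 := by
        intro t ht
        rw [abs_pow]
        calc |t|^(m+2) ≤ η^(m+2) := pow_le_pow_left₀ (abs_nonneg _) ht _
          _ ≤ η^2 := pow_le_pow_of_le_one hη0.le hη1 (by omega)
      have e : P.coeff (m+2) * t0^(m+2) + P.coeff (m+2) * t2^(m+2) - 2 * (P.coeff (m+2) * t1^(m+2))
          = P.coeff (m+2) * (t0^(m+2) + t2^(m+2) - 2 * t1^(m+2)) := by ring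
      rw [e, abs_mul]
      apply mul_le_mul_of_nonneg_left _ (abs_nonneg _)
      have b0 := hb t0 h0
      have b1 := hb t1 h1
      have b2 := hb t2 h2
      have habs : |t0^(m+2) + t2^(m+2) - 2 * t1^(m+2)| ≤ |t0^(m+2)| + |t2^(m+2)| + 2*|t1^(m+2)| := by
        have g3 : |2 * t1^(m+2)| = 2 * |t1^(m+2)| := by rw [abs_mul]; norm_num
        calc |t0^(m+2) + t2^(m+2) - 2 * t1^(m+2)| ≤ |t0^(m+2) + t2^(m+2)| + |2*t1^(m+2)| := abs_sub _ _
          _ ≤ |t0^(m+2)| + |t2^(m+2)| + 2*|t1^(m+2)| := by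
              rw [g3]; linarith [abs_add_le (t0^(m+2)) (t2^(m+2))]
      linarith
  calc |∑ i ∈ Finset.range (P.natDegree + 1), (P.coeff i * t0^i + P.coeff i * t2^i - 2 * (P.coeff i * t1^i))|
      ≤ ∑ i ∈ Finset.range (P.natDegree + 1), |P.coeff i * t0^i + P.coeff i * t2^i - 2 * (P.coeff i * t1^i)| :=
        Finset.abs_sum_le_sum_abs _ _
    _ ≤ ∑ i ∈ Finset.range (P.natDegree + 1), |P.coeff i| * (4*η^2) := Finset.sum_le_sum hterm
    _ = (∑ i ∈ Finset.range (P.natDegree + 1), |P.coeff i|) * (4*η^2) := by rw [← Finset.sum_mul]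
    _ = 4 * (∑ i ∈ Finset.range (P.natDegree+1), |P.coeff i|) * η^2 := by ring


lemma aux_tendsto_s13 {ρ : ℝ} (h0 : 0 ≤ ρ) (h1 : ρ < 1) :
    Filter.Tendsto (fun N : ℕ => (((N:ℝ)+1)*((N:ℝ)+2)*4) * ρ^N) Filter.atTop (nhds 0) := by
  have hn : ‖ρ‖ < 1 := by rwa [Real.norm_eq_abs, abs_of_nonneg h0]
  have h2 : Summable (fun N : ℕ => ((N:ℝ))^2 * ρ^N) :=
    summable_pow_mul_geometric_of_norm_lt_one 2 hn
  have hA : Summable (fun N : ℕ => ((N:ℝ))^1 * ρ^N) :=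
    summable_pow_mul_geometric_of_norm_lt_one 1 hn
  have hB : Summable (fun N : ℕ => ((N:ℝ))^0 * ρ^N) :=
    summable_pow_mul_geometric_of_norm_lt_one 0 hn
  have hS : Summable (fun N : ℕ => (((N:ℝ)+1)*((N:ℝ)+2)*4) * ρ^N) := by
    have := ((h2.mul_left 4).add (hA.mul_left 12)).add (hB.mul_left 8)
    apply this.congr
    intro N
    ring
  exact hS.tendsto_atTop_zero

set_option maxHeartbeats 1000000 in
lemma Zf_not_holder {x₀ α : ℝ} (hα : 1 < α) : ¬ HolderAt Zf α x₀ := by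
  rintro ⟨P, C, δ, hC, hδ, -, hbd⟩
  set D : ℝ := ∑ i ∈ Finset.range (P.natDegree + 1), |P.coeff i| with hD
  have hD0 : 0 ≤ D := Finset.sum_nonneg fun i _ => abs_nonneg _
  set r : ℝ := (1/2 : ℝ) ^ (α - 1) with hr
  have hr0 : 0 < r := Real.rpow_pos_of_pos (by norm_num) _
  have hr1 : r < 1 := Real.rpow_lt_one (by norm_num) (by norm_num) (by linarith)
  -- key inequality for every N with (1/2)^N < δ
  have hkey : ∀ N : ℕ, ((1/2:ℝ))^N < δ → cf N ≤ 4*C*r^N + 8*D*(1/2:ℝ)^N := by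
    intro N hNδ
    set η : ℝ := (1/2:ℝ)^N with hη
    have hη0 : 0 < η := by positivity
    have hη1 : η ≤ 1 := by
      rw [hη]; exact pow_le_one₀ (by norm_num) (by norm_num)
    set E : ℝ := (2:ℝ)^N with hE
    have hE0 : 0 < E := by positivity
    have hEη : E⁻¹ = η := by rw [hE, hη, ← inv_pow]; norm_num
    set k : ℤ := ⌊E * x₀⌋ with hk
    have hk1 : (k:ℝ) ≤ E * x₀ := Int.floor_le _
    have hk2 : E * x₀ < (k:ℝ) + 1 := Int.lt_floor_add_one _
    set p0 : ℝ := (k:ℝ)/2^N with hp0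
    set p2 : ℝ := ((k:ℝ)+1)/2^N with hp2
    set p1 : ℝ := (2*(k:ℝ)+1)/2^(N+1) with hp1
    -- distances to x₀
    have ht0 : |p0 - x₀| ≤ η := by
      have h1 : p0 - x₀ = ((k:ℝ) - E*x₀)/E := by rw [hp0, hE]; field_simp
      rw [h1, abs_div, abs_of_pos hE0, div_le_iff₀ hE0]
      rw [abs_le]
      constructor
      · nlinarith [mul_pos hη0 hE0, hEη, inv_mul_cancel₀ hE0.ne']
      · nlinarith [hEη, inv_mul_cancel₀ hE0.ne']
    have hηE : η * E = 1 := by rw [← hEη]; exact inv_mul_cancel₀ hE0.ne'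
    have ht2 : |p2 - x₀| ≤ η := by
      have h1 : p2 - x₀ = ((k:ℝ) + 1 - E*x₀)/E := by rw [hp2, hE]; field_simp
      rw [h1, abs_div, abs_of_pos hE0, div_le_iff₀ hE0, abs_le]
      constructor <;> nlinarith
    have ht1 : |p1 - x₀| ≤ η := by
      have hE2 : (2:ℝ)^(N+1) = 2*E := by rw [hE, pow_succ]; ring
      have hE20 : (0:ℝ) < 2*E := by linarith
      have h1 : p1 - x₀ = (2*(k:ℝ) + 1 - 2*E*x₀)/(2*E) := by
        rw [hp1, hE2]; field_simp
      rw [h1, abs_div, abs_of_pos hE20, div_le_iff₀ hE20, abs_le]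
      constructor <;> nlinarith
    -- the second-difference of Zf equals that of W
    have hcomb : p0 + p2 - 2*p1 = 0 := by
      rw [hp0, hp1, hp2, pow_succ]; field_simp; ring
    have hZcomb : Zf p0 + Zf p2 - 2 * Zf p1 = -(cf N * η) := by
      unfold Zf
      have := W_second_diff N k
      rw [← hp0, ← hp2, ← hp1] at this
      rw [← hEη, hE]
      linarith [this, hcomb]
    -- polynomial part bound
    set t0 : ℝ := p0 - x₀
    set t1 : ℝ := p1 - x₀
    set t2 : ℝ := p2 - x₀
    have htc : t0 + t2 - 2*t1 = 0 := by
      simp only [t0, t1, t2]; linarith [hcomb]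
    have hPcomb : |P.eval t0 + P.eval t2 - 2 * P.eval t1| ≤ 4*D*η^2 := by
      have := poly_combo_bound P hη0 hη1 ht0 ht1 ht2 htc
      calc |P.eval t0 + P.eval t2 - 2*P.eval t1|
          ≤ 4 * (∑ i ∈ Finset.range (P.natDegree+1), |P.coeff i|) * η^2 := this
        _ = 4*D*η^2 := by rw [hD]
    -- Hölder bounds at the three points
    have hrpow : ∀ t : ℝ, |t - x₀| ≤ η → |t - x₀|^α ≤ η^α := fun t ht =>
      Real.rpow_le_rpow (abs_nonneg _) ht (by linarith)
    have hb0 := hbd p0 (lt_of_le_of_lt ht0 hNδ)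
    have hb1 := hbd p1 (lt_of_le_of_lt ht1 hNδ)
    have hb2 := hbd p2 (lt_of_le_of_lt ht2 hNδ)
    have hC0 := hC.le
    have hbb0 : |Zf p0 - P.eval t0| ≤ C * η^α :=
      hb0.trans (mul_le_mul_of_nonneg_left (hrpow p0 ht0) hC0)
    have hbb1 : |Zf p1 - P.eval t1| ≤ C * η^α :=
      hb1.trans (mul_le_mul_of_nonneg_left (hrpow p1 ht1) hC0)
    have hbb2 : |Zf p2 - P.eval t2| ≤ C * η^α :=
      hb2.trans (mul_le_mul_of_nonneg_left (hrpow p2 ht2) hC0)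
    clear_value D r η E k p0 p1 p2 t0 t1 t2
    -- combine
    have hmain : cf N * η ≤ 4*C*η^α + 4*D*η^2 := by
      have h1 : |(Zf p0 + Zf p2 - 2*Zf p1) - (P.eval t0 + P.eval t2 - 2*P.eval t1)| ≤ 4*C*η^α := by
        have : (Zf p0 + Zf p2 - 2*Zf p1) - (P.eval t0 + P.eval t2 - 2*P.eval t1)
            = (Zf p0 - P.eval t0) + (Zf p2 - P.eval t2) - 2*(Zf p1 - P.eval t1) := by ring
        rw [this]
        calc |(Zf p0 - P.eval t0) + (Zf p2 - P.eval t2) - 2*(Zf p1 - P.eval t1)|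
            ≤ |(Zf p0 - P.eval t0) + (Zf p2 - P.eval t2)| + |2*(Zf p1 - P.eval t1)| := abs_sub _ _
          _ ≤ |Zf p0 - P.eval t0| + |Zf p2 - P.eval t2| + 2*|Zf p1 - P.eval t1| := by
              rw [abs_mul]
              have := abs_add_le (Zf p0 - P.eval t0) (Zf p2 - P.eval t2)
              norm_num
              linarith
          _ ≤ 4*C*η^α := by linarith
      have h2 : cf N * η = |Zf p0 + Zf p2 - 2*Zf p1| := by
        rw [hZcomb, abs_neg, abs_of_pos (mul_pos (cf_pos N) hη0)]
      calc cf N * η = |Zf p0 + Zf p2 - 2*Zf p1| := h2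
        _ ≤ |(Zf p0 + Zf p2 - 2*Zf p1) - (P.eval t0 + P.eval t2 - 2*P.eval t1)|
            + |P.eval t0 + P.eval t2 - 2*P.eval t1| := by
              have := abs_sub_abs_le_abs_sub (Zf p0 + Zf p2 - 2*Zf p1) (P.eval t0 + P.eval t2 - 2*P.eval t1)
              have h3 := abs_add_le ((Zf p0 + Zf p2 - 2*Zf p1) - (P.eval t0 + P.eval t2 - 2*P.eval t1)) (P.eval t0 + P.eval t2 - 2*P.eval t1)
              calc |Zf p0 + Zf p2 - 2*Zf p1| = |((Zf p0 + Zf p2 - 2*Zf p1) - (P.eval t0 + P.eval t2 - 2*P.eval t1)) + (P.eval t0 + P.eval t2 - 2*P.eval t1)| := by ring_nf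
                _ ≤ _ := h3
        _ ≤ 4*C*η^α + 4*D*η^2 := by linarith [h1, hPcomb]
    -- convert η^α into r^N * η
    have e1 : η ^ (α-1) = r^N := by
      rw [hη, hr, ← Real.rpow_natCast (1/2:ℝ) N, ← Real.rpow_mul (by norm_num : (0:ℝ) ≤ 1/2),
        mul_comm ((N:ℝ)) (α-1), Real.rpow_mul (by norm_num : (0:ℝ) ≤ 1/2), Real.rpow_natCast]
    have hηα : η^α = r^N * η := by
      rw [show α = (α-1)+1 by ring, Real.rpow_add hη0, Real.rpow_one, e1]
    rw [hηα] at hmain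
    -- divide by η
    have hdiv : cf N ≤ 4*C*r^N + 4*D*η := by
      have h4 : cf N * η ≤ (4*C*r^N + 4*D*η) * η := by nlinarith [hmain, sq η]
      exact le_of_mul_le_mul_right h4 hη0
    calc cf N ≤ 4*C*r^N + 4*D*η := hdiv
      _ ≤ 4*C*r^N + 8*D*η := by nlinarith [hD0, hη0.le]
  -- now derive a contradiction from hkey
  have hhalf0 : (0:ℝ) ≤ 1/2 := by norm_num
  have hhalf1 : (1/2:ℝ) < 1 := by norm_num
  have hT : Filter.Tendsto
      (fun N : ℕ => 4*C*((((N:ℝ)+1)*((N:ℝ)+2)*4) * r^N) + 8*D*((((N:ℝ)+1)*((N:ℝ)+2)*4) * (1/2:ℝ)^N))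
      Filter.atTop (nhds 0) := by
    have t1 := (aux_tendsto_s13 hr0.le hr1).const_mul (4*C)
    have t2 := (aux_tendsto_s13 hhalf0 hhalf1).const_mul (8*D)
    have := t1.add t2
    simpa using this
  have hδev : ∀ᶠ N : ℕ in Filter.atTop, (1/2:ℝ)^N < δ :=
    (tendsto_pow_atTop_nhds_zero_of_lt_one hhalf0 hhalf1).eventually (gt_mem_nhds hδ)
  have hlt1 : ∀ᶠ N : ℕ in Filter.atTop,
      4*C*((((N:ℝ)+1)*((N:ℝ)+2)*4) * r^N) + 8*D*((((N:ℝ)+1)*((N:ℝ)+2)*4) * (1/2:ℝ)^N) < 1 :=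
    hT.eventually (gt_mem_nhds one_pos)
  obtain ⟨N, hN1, hN2⟩ := (hlt1.and hδev).exists
  have hkeyN := hkey N hN2
  have hq : (0:ℝ) < ((N:ℝ)+1)*((N:ℝ)+2)*4 := by positivity
  have hcf : cf N * (((N:ℝ)+1)*((N:ℝ)+2)*4) = 1 := by
    unfold cf
    exact inv_mul_cancel₀ hq.ne'
  have : (1:ℝ) ≤ 4*C*((((N:ℝ)+1)*((N:ℝ)+2)*4) * r^N) + 8*D*((((N:ℝ)+1)*((N:ℝ)+2)*4) * (1/2:ℝ)^N) := by
    have h5 := mul_le_mul_of_nonneg_right hkeyN hq.le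
    rw [hcf] at h5
    calc (1:ℝ) ≤ (4*C*r^N + 8*D*(1/2:ℝ)^N) * (((N:ℝ)+1)*((N:ℝ)+2)*4) := h5
      _ = 4*C*((((N:ℝ)+1)*((N:ℝ)+2)*4) * r^N) + 8*D*((((N:ℝ)+1)*((N:ℝ)+2)*4) * (1/2:ℝ)^N) := by ring
  linarith

lemma W_zero : W 0 = 0 := by
  have : ∀ n : ℕ, gW n 0 = 0 := by
    intro n
    have : (2:ℝ)^n * 0 = ((0:ℤ):ℝ) := by norm_num
    rw [gW, this, saw_intCast, mul_zero]
  rw [W]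
  simp [this]

lemma W_one : W 1 = 0 := by
  have : ∀ n : ℕ, gW n 1 = 0 := by
    intro n
    have : (2:ℝ)^n * 1 = ((2^n:ℤ):ℝ) := by push_cast; ring
    rw [gW, this, saw_intCast, mul_zero]
  rw [W]
  simp [this]

lemma Zf_diff {x y : ℝ} (hxy : x ≤ y) : (y - x)*(3/4) ≤ Zf y - Zf x := by
  have h := W_lip y x
  have h2 : |y - x| = y - x := abs_of_nonneg (by linarith)
  rw [h2] at h
  have := abs_le.1 h
  unfold Zf
  linarith [this.1]

lemma Zf_strictMono : StrictMonoOn Zf (Set.Icc 0 1) := by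
  intro x _ y _ hxy
  have := Zf_diff hxy.le
  linarith

lemma Zf_mapsTo : Set.MapsTo Zf (Set.Icc (0:ℝ) 1) (Set.Icc (0:ℝ) 1) := by
  intro x hx
  have h0 : Zf 0 = 0 := by rw [Zf, W_zero]; ring
  have h1 : Zf 1 = 1 := by rw [Zf, W_one]; ring
  have hd0 := Zf_diff hx.1
  have hd1 := Zf_diff hx.2
  constructor
  · rw [← h0]; nlinarith [hx.1, hx.2]
  · rw [← h1]; nlinarith [hx.1, hx.2]

lemma Zf_holder_one (x₀ : ℝ) : HolderAt Zf 1 x₀ := by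
  refine ⟨Polynomial.C (Zf x₀), 2, 1, by norm_num, by norm_num, Or.inr (by simp), ?_⟩
  intro x hx
  rw [Polynomial.eval_C, Real.rpow_one]
  have h := W_lip x x₀
  have h2 : Zf x - Zf x₀ = (x - x₀) + (W x - W x₀) := by rw [Zf, Zf]; ring
  have := abs_le.1 h
  rw [h2]
  have habs := abs_add_le (x - x₀) (W x - W x₀)
  have := abs_nonneg (x - x₀)
  calc |(x - x₀) + (W x - W x₀)| ≤ |x - x₀| + |W x - W x₀| := habs
    _ ≤ |x - x₀| + |x - x₀|/4 := by linarith [W_lip x x₀]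
    _ ≤ 2 * |x - x₀| := by linarith

lemma Zf_holderExp (x : ℝ) : holderExp Zf x = (1 : EReal) := by
  rw [holderExp]
  apply le_antisymm
  · apply sSup_le
    rintro h ⟨α, hα0, hH, rfl⟩
    rcases le_or_gt α 1 with hle | hgt
    · exact_mod_cast EReal.coe_le_coe_iff.2 hle
    · exact absurd hH (Zf_not_holder hgt)
  · apply le_sSup
    exact ⟨1, by norm_num, Zf_holder_one x, by norm_num⟩

lemma dimHE_one {s : Set ℝ} (h : (interior s).Nonempty) : dimHE s = 1 := by
  have hne : s.Nonempty := h.mono interior_subset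
  rw [dimHE, if_pos hne, Real.dimH_of_nonempty_interior h]
  simp


/-- There exists a strictly monotone increasing function `Z : [0,1] → [0,1]` whose pointwise
Hölder exponent equals `1` at every point of `[0,1]`. In particular it is homogeneously
multifractal, with `d_Z(1) = 1` and `d_Z(h) = -∞` for `h ≠ 1`. -/
theorem monofractal_increasing_function :
    ∃ Z : ℝ → ℝ, StrictMonoOn Z (Set.Icc 0 1) ∧
      Set.MapsTo Z (Set.Icc (0:ℝ) 1) (Set.Icc (0:ℝ) 1) ∧
      (∀ x ∈ Set.Icc (0:ℝ) 1, holderExp Z x = (1 : EReal)) ∧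
      IsHMF Z ∧ specF Z (1 : EReal) = 1 ∧
      (∀ h : EReal, h ≠ 1 → specF Z h = ⊥) := by
  refine ⟨Zf, Zf_strictMono, Zf_mapsTo, fun x _ => Zf_holderExp x, ?_, ?_, ?_⟩
  · -- IsHMF
    intro a b ha hab hb1 h
    by_cases hh : h = 1
    · subst hh
      have h1 : {x ∈ Set.Ioo a b | holderExp Zf x = 1} = Set.Ioo a b := by
        ext x
        simp only [Set.mem_setOf_eq, Set.mem_Ioo]
        exact ⟨fun hx => hx.1, fun hx => ⟨hx, Zf_holderExp x⟩⟩
      have h2 : {x ∈ Set.Icc (0:ℝ) 1 | holderExp Zf x = 1} = Set.Icc 0 1 := by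
        ext x
        simp only [Set.mem_setOf_eq, Set.mem_Icc]
        exact ⟨fun hx => hx.1, fun hx => ⟨hx, Zf_holderExp x⟩⟩
      rw [h1, specF, h2, dimHE_one, dimHE_one]
      · rw [interior_Icc]; exact ⟨1/2, by norm_num, by norm_num⟩
      · rw [interior_Ioo]; exact ⟨(a+b)/2, by linarith, by linarith⟩
    · have h1 : {x ∈ Set.Ioo a b | holderExp Zf x = h} = ∅ := by
        ext x
        simp only [Set.mem_setOf_eq, Set.mem_empty_iff_false, iff_false, not_and]
        intro _ hc
        exact hh (by rw [← hc, Zf_holderExp x])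
      have h2 : {x ∈ Set.Icc (0:ℝ) 1 | holderExp Zf x = h} = ∅ := by
        ext x
        simp only [Set.mem_setOf_eq, Set.mem_empty_iff_false, iff_false, not_and]
        intro _ hc
        exact hh (by rw [← hc, Zf_holderExp x])
      rw [h1, specF, h2]
  · -- specF Zf 1 = 1
    have h2 : {x ∈ Set.Icc (0:ℝ) 1 | holderExp Zf x = 1} = Set.Icc 0 1 := by
      ext x
      simp only [Set.mem_setOf_eq, Set.mem_Icc]
      exact ⟨fun hx => hx.1, fun hx => ⟨hx, Zf_holderExp x⟩⟩
    rw [specF, h2, dimHE_one]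
    rw [interior_Icc]; exact ⟨1/2, by norm_num, by norm_num⟩
  · -- specF Zf h = ⊥ for h ≠ 1
    intro h hh
    have h2 : {x ∈ Set.Icc (0:ℝ) 1 | holderExp Zf x = h} = ∅ := by
      ext x
      simp only [Set.mem_setOf_eq, Set.mem_empty_iff_false, iff_false, not_and]
      intro _ hc
      exact hh (by rw [← hc, Zf_holderExp x])
    rw [specF, h2, dimHE, if_neg (by simp)]
end
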